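/- arXiv:2012.00806 — 5 statements merged into one kernel-verified Lean document; each statement's English description precedes it below -/
import Mathlib

section
/- Let H be a finite hypergraph with no isolated vertices in which every edge has size at most k. Then for every complex number z with |z| > 2^k, the edge cover polynomial satisfies E(H, z) ≠ 0. -/
open Finset

/-- The edge cover polynomial of a hypergraph with vertex set `V` and edge collection `E`,
evaluated at `z`: the sum of `z^{|F|}` over all subsets `F ⊆ E` covering every vertex. -/
noncomputable def hypEdgeCoverPoly {V : Type*} [Fintype V] [DecidableEq V]
    (E : Finset (Finset V)) (z : ℂ) : ℂ :=
  ∑ F ∈ E.powerset.filter (fun F => ∀ v : V, ∃ e ∈ F, v ∈ e), z ^ F.card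

section EdgeCoverAux

variable {V : Type} [Fintype V] [DecidableEq V]

/-- Partial edge cover partition function: sum over `F ⊆ E` covering every vertex of `U`. -/
noncomputable def Zc (z : ℂ) (U : Finset V) (E : Finset (Finset V)) : ℂ :=
  ∑ F ∈ E.powerset.filter (fun F => ∀ v ∈ U, ∃ e ∈ F, v ∈ e), z ^ F.card

lemma Zc_eq (z : ℂ) (U : Finset V) (E : Finset (Finset V)) :
    Zc z U E = ∑ F ∈ E.powerset, if (∀ v ∈ U, ∃ e ∈ F, v ∈ e) then z ^ F.card else 0 :=
  Finset.sum_filter _ _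

lemma Zc_insert (z : ℂ) (U : Finset V) {e : Finset V} {s : Finset (Finset V)} (hes : e ∉ s) :
    Zc z U (insert e s) = Zc z U s + z * Zc z (U \ e) s := by
  rw [Zc_eq, Zc_eq, Zc_eq, Finset.sum_powerset_insert hes]
  congr 1
  rw [Finset.mul_sum]
  apply Finset.sum_congr rfl
  intro F hF
  have heF : e ∉ F := fun h => hes (Finset.mem_powerset.1 hF h)
  have hcard : (insert e F).card = F.card + 1 := Finset.card_insert_of_notMem heF
  have hcond : (∀ v ∈ U, ∃ e' ∈ insert e F, v ∈ e') ↔ (∀ v ∈ U \ e, ∃ e' ∈ F, v ∈ e') := by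
    constructor
    · intro h v hv
      rcases Finset.mem_sdiff.1 hv with ⟨hvU, hve⟩
      rcases h v hvU with ⟨e', he', hve'⟩
      rcases Finset.mem_insert.1 he' with rfl | he'F
      · exact absurd hve' hve
      · exact ⟨e', he'F, hve'⟩
    · intro h v hv
      by_cases hve : v ∈ e
      · exact ⟨e, Finset.mem_insert_self e F, hve⟩
      · rcases h v (Finset.mem_sdiff.2 ⟨hv, hve⟩) with ⟨e', he'F, hve'⟩
        exact ⟨e', Finset.mem_insert_of_mem he'F, hve'⟩
  by_cases hc : ∀ v ∈ U \ e, ∃ e' ∈ F, v ∈ e'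
  · rw [if_pos (hcond.2 hc), if_pos hc, hcard, pow_succ, mul_comm (z ^ F.card) z]
  · rw [if_neg (fun h => hc (hcond.1 h)), if_neg hc, mul_zero]

/-- Edge deletion recursion. -/
lemma Zc_erase (z : ℂ) (U : Finset V) (E : Finset (Finset V)) {e : Finset V} (he : e ∈ E) :
    Zc z U E = Zc z U (E.erase e) + z * Zc z (U \ e) (E.erase e) := by
  conv_lhs => rw [← Finset.insert_erase he]
  exact Zc_insert z U (Finset.notMem_erase e E)

/-- Vertex identity: covers of `U` split according to whether some edge contains `u`. -/
lemma Zc_vertex (z : ℂ) (U : Finset V) (E : Finset (Finset V)) (u : V) :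
    Zc z U E = Zc z (insert u U) E + Zc z U (E.filter (fun e => u ∉ e)) := by
  classical
  unfold Zc
  rw [← Finset.sum_filter_add_sum_filter_not
    (E.powerset.filter (fun F => ∀ v ∈ U, ∃ e ∈ F, v ∈ e)) (fun F => ∃ e ∈ F, u ∈ e)]
  congr 1
  · congr 1
    rw [Finset.filter_filter]
    apply Finset.filter_congr
    intro F _
    rw [Finset.forall_mem_insert]
    tauto
  · congr 1
    rw [Finset.filter_filter]
    ext F
    simp only [Finset.mem_filter, Finset.mem_powerset, Finset.subset_iff, Finset.mem_filter]
    constructor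
    · rintro ⟨hsub, hcov, hnot⟩
      push_neg at hnot
      exact ⟨fun {x} hx => ⟨hsub hx, hnot x hx⟩, hcov⟩
    · rintro ⟨hsub, hcov⟩
      refine ⟨fun {x} hx => (hsub hx).1, hcov, ?_⟩
      push_neg
      exact fun x hx => (hsub hx).2

lemma Zc_of_not_coverable (z : ℂ) {U : Finset V} (E : Finset (Finset V))
    {u : V} (hu : u ∈ U) (h : ∀ e ∈ E, u ∉ e) : Zc z U E = 0 := by
  unfold Zc
  rw [Finset.filter_false_of_mem, Finset.sum_empty]
  intro F hF hcov
  rcases hcov u hu with ⟨e, heF, hue⟩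
  exact h e (Finset.mem_powerset.1 hF heF) hue

lemma sum_powerset_pow (z : ℂ) (E : Finset (Finset V)) :
    ∑ F ∈ E.powerset, z ^ F.card = (1 + z) ^ E.card := by
  induction E using Finset.induction with
  | empty => simp
  | @insert a s h ih =>
      rw [Finset.sum_powerset_insert h, Finset.card_insert_of_notMem h, pow_succ]
      have h2 : ∑ t ∈ s.powerset, z ^ (insert a t).card = z * (1 + z) ^ s.card := by
        rw [← ih, Finset.mul_sum]
        apply Finset.sum_congr rfl
        intro t ht
        have hat : a ∉ t := fun hh => h (Finset.mem_powerset.1 ht hh)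
        rw [Finset.card_insert_of_notMem hat, pow_succ, mul_comm (z ^ t.card) z]
      rw [h2, ih]
      ring

lemma Zc_empty_left (z : ℂ) (E : Finset (Finset V)) : Zc z ∅ E = (1 + z) ^ E.card := by
  unfold Zc
  rw [Finset.filter_true_of_mem (by intro F _; simp), sum_powerset_pow]

end EdgeCoverAux

section Analytic

variable {V : Type} [Fintype V] [DecidableEq V]

lemma Cgen_aux (z : ℂ) (U : Finset V) (E : Finset (Finset V)) {e : Finset V} (he : e ∈ E)
    {c : ℝ}
    (hD : ‖Zc z U (E.erase e)‖ ≤ c * ‖Zc z (U \ e) (E.erase e)‖) :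
    (‖z‖ - c) * ‖Zc z (U \ e) (E.erase e)‖ ≤ ‖Zc z U E‖ := by
  have hrec := Zc_erase z U E he
  set A := Zc z U (E.erase e) with hA
  set B := Zc z (U \ e) (E.erase e) with hB
  have h1 : ‖z * B‖ ≤ ‖A + z * B‖ + ‖A‖ := by
    calc ‖z * B‖ = ‖(A + z * B) + (-A)‖ := by ring_nf
    _ ≤ ‖A + z * B‖ + ‖-A‖ := norm_add_le _ _
    _ = ‖A + z * B‖ + ‖A‖ := by rw [norm_neg]
  rw [norm_mul] at h1
  rw [hrec]
  nlinarith [norm_nonneg B, norm_nonneg A]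

end Analytic

section Analytic

variable {V : Type} [Fintype V] [DecidableEq V]

lemma Dmono (k : ℕ) (z : ℂ) (hz : (2:ℝ)^k < ‖z‖) :
    ∀ E : Finset (Finset V), (∀ e ∈ E, e.card ≤ k) →
      ∀ U : Finset V, (∀ v ∈ U, ∃ e ∈ E, v ∈ e) →
      ∀ W : Finset V,
        ‖Zc z (U ∪ W) E‖ ≤ 2 ^ W.card * ‖Zc z U E‖ := by
  intro E
  induction E using Finset.strongInduction with
  | _ E IH =>
  intro hsize U hcovU
  set R := ‖z‖ with hR
  set β : ℝ := (2:ℝ)^k / 2 with hβdef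
  have h2k1 : (1:ℝ) ≤ 2^k := one_le_pow₀ one_le_two
  have hβpos : 0 < β := by positivity
  have hRβ : 0 < R - β := by
    have : β < 2^k := by rw [hβdef]; linarith
    linarith
  have hββ : β ≤ R - β := by
    have : 2 * β = 2^k := by rw [hβdef]; ring
    linarith
  -- size helper
  have hpow : ∀ (e : Finset V) (u : V) (S : Finset V), u ∈ e → e.card ≤ k →
      S ⊆ e.erase u → (2:ℝ)^S.card ≤ β := by
    intro e u S hu hek hsub
    have h1 : S.card ≤ e.card - 1 := by
      have := Finset.card_le_card hsub
      rwa [Finset.card_erase_of_mem hu] at this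
    have h2 : 1 ≤ e.card := Finset.card_pos.2 ⟨u, hu⟩
    have h3 : S.card + 1 ≤ k := by omega
    have h4 : (2:ℝ)^(S.card+1) ≤ 2^k := pow_le_pow_right₀ one_le_two h3
    rw [pow_succ] at h4
    rw [hβdef]
    linarith
  -- coverability is preserved by deleting an edge together with its vertices
  have covErase : ∀ (E₀ : Finset (Finset V)) (e : Finset V) (U' : Finset V),
      (∀ v ∈ U', ∃ e' ∈ E₀, v ∈ e') →
      ∀ v ∈ U' \ e, ∃ e' ∈ E₀.erase e, v ∈ e' := by
    intro E₀ e U' hcov v hv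
    rcases Finset.mem_sdiff.1 hv with ⟨hvU, hve⟩
    rcases hcov v hvU with ⟨e', he', hve'⟩
    exact ⟨e', Finset.mem_erase.2 ⟨fun h => hve (h ▸ hve'), he'⟩, hve'⟩
  -- single edge-deletion lower bound, for any subset of E
  have Cgen : ∀ E₀ : Finset (Finset V), E₀ ⊆ E → ∀ e ∈ E₀, ∀ U' : Finset V,
      (∀ v ∈ U', ∃ e' ∈ E₀, v ∈ e') →
      (R - (2:ℝ)^((U' ∩ e).card)) * ‖Zc z (U' \ e) (E₀.erase e)‖
        ≤ ‖Zc z U' E₀‖ := by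
    intro E₀ hsub e he U' hcov
    apply Cgen_aux z U' E₀ he
    have hss : E₀.erase e ⊂ E :=
      Finset.ssubset_of_ssubset_of_subset (Finset.erase_ssubset he) hsub
    have hIH := IH _ hss
      (fun f hf => hsize f (hsub (Finset.mem_of_mem_erase hf)))
      (U' \ e) (covErase E₀ e U' hcov) (U' ∩ e)
    rwa [Finset.sdiff_union_inter] at hIH
  -- iterated deletion of all edges through a vertex u ∉ U'
  have chain : ∀ d : ℕ, ∀ E₀ : Finset (Finset V), E₀ ⊆ E → ∀ (U' : Finset V) (u : V),
      u ∉ U' → (∀ v ∈ U', ∃ e ∈ E₀, v ∈ e) → (E₀.filter (fun e => u ∈ e)).card = d →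
      (R - β) ^ d * ‖Zc z (U' \ (E₀.filter (fun e => u ∈ e)).biUnion id)
          (E₀.filter (fun e => u ∉ e))‖ ≤ ‖Zc z U' E₀‖ := by
    intro d
    induction d with
    | zero =>
      intro E₀ hsub U' u hu hcov hd
      rw [Finset.card_eq_zero] at hd
      have hall : ∀ e ∈ E₀, u ∉ e := by
        intro e he hue
        have : e ∈ E₀.filter (fun e => u ∈ e) := Finset.mem_filter.2 ⟨he, hue⟩
        rw [hd] at this
        exact absurd this (Finset.notMem_empty e)
      rw [hd, Finset.filter_true_of_mem hall]
      simp
    | succ d ihd =>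
      intro E₀ hsub U' u hu hcov hd
      obtain ⟨e, he⟩ : ∃ e, e ∈ E₀.filter (fun e => u ∈ e) := by
        have : 0 < (E₀.filter (fun e => u ∈ e)).card := by omega
        exact Finset.card_pos.1 this
      have heE : e ∈ E₀ := (Finset.mem_filter.1 he).1
      have hue : u ∈ e := (Finset.mem_filter.1 he).2
      have hc1 : (2:ℝ)^((U' ∩ e).card) ≤ β := by
        apply hpow e u _ hue (hsize e (hsub heE))
        intro v hv
        rcases Finset.mem_inter.1 hv with ⟨hvU, hve⟩
        exact Finset.mem_erase.2 ⟨fun h => hu (h ▸ hvU), hve⟩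
      have step1 := Cgen E₀ hsub e heE U' hcov
      have hd2 : ((E₀.erase e).filter (fun f => u ∈ f)).card = d := by
        rw [Finset.filter_erase, Finset.card_erase_of_mem he, hd]
        omega
      have step2 := ihd (E₀.erase e) ((Finset.erase_subset e E₀).trans hsub)
        (U' \ e) u (fun h => hu (Finset.mem_sdiff.1 h).1)
        (covErase E₀ e U' hcov) hd2
      have hsetE : (E₀.erase e).filter (fun f => u ∉ f) = E₀.filter (fun f => u ∉ f) := by
        ext f
        simp only [Finset.mem_filter, Finset.mem_erase]
        constructor
        · rintro ⟨⟨_, hf⟩, hnu⟩; exact ⟨hf, hnu⟩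
        · rintro ⟨hf, hnu⟩; exact ⟨⟨fun h => hnu (h ▸ hue), hf⟩, hnu⟩
      have hsetU : (U' \ e) \ ((E₀.erase e).filter (fun f => u ∈ f)).biUnion id
          = U' \ (E₀.filter (fun f => u ∈ f)).biUnion id := by
        rw [Finset.filter_erase]
        ext v
        simp only [Finset.mem_sdiff, Finset.mem_biUnion, Finset.mem_erase, id_eq]
        constructor
        · rintro ⟨⟨hvU, hve⟩, hnb⟩
          refine ⟨hvU, ?_⟩
          rintro ⟨f, hf, hvf⟩
          by_cases hfe : f = e
          · exact hve (hfe ▸ hvf)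
          · exact hnb ⟨f, ⟨hfe, hf⟩, hvf⟩
        · rintro ⟨hvU, hnb⟩
          refine ⟨⟨hvU, fun hve => hnb ⟨e, Finset.mem_filter.2 ⟨heE, hue⟩, hve⟩⟩, ?_⟩
          rintro ⟨f, ⟨_, hf⟩, hvf⟩
          exact hnb ⟨f, hf, hvf⟩
      rw [hsetE, hsetU] at step2
      calc (R - β) ^ (d+1) * ‖Zc z (U' \ (E₀.filter (fun e => u ∈ e)).biUnion id)
              (E₀.filter (fun e => u ∉ e))‖
          = (R - β) * ((R - β) ^ d * ‖Zc z (U' \ (E₀.filter (fun e => u ∈ e)).biUnion id)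
              (E₀.filter (fun e => u ∉ e))‖) := by ring
        _ ≤ (R - β) * ‖Zc z (U' \ e) (E₀.erase e)‖ :=
            mul_le_mul_of_nonneg_left step2 (le_of_lt hRβ)
        _ ≤ (R - (2:ℝ)^((U' ∩ e).card)) * ‖Zc z (U' \ e) (E₀.erase e)‖ :=
            mul_le_mul_of_nonneg_right (by linarith) (norm_nonneg _)
        _ ≤ ‖Zc z U' E₀‖ := step1
  -- deleting the whole star of u does not increase the absolute value
  have Rstep : ∀ (U' : Finset V), (∀ v ∈ U', ∃ e ∈ E, v ∈ e) → ∀ u : V, u ∉ U' →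
      ‖Zc z U' (E.filter (fun e => u ∉ e))‖ ≤ ‖Zc z U' E‖ := by
    intro U' hcov u hu
    by_cases hd0 : (E.filter (fun e => u ∈ e)).card = 0
    · have hall : ∀ e ∈ E, u ∉ e := by
        intro e he hue
        have : e ∈ E.filter (fun e => u ∈ e) := Finset.mem_filter.2 ⟨he, hue⟩
        rw [Finset.card_eq_zero.1 hd0] at this
        exact absurd this (Finset.notMem_empty e)
      rw [Finset.filter_true_of_mem hall]
    · set D := E.filter (fun e => u ∈ e) with hDdef
      set d := D.card with hddef
      have hd1 : 0 < d := Nat.pos_of_ne_zero hd0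
      have hchain := chain d E (Finset.Subset.refl E) U' u hu hcov rfl
      obtain ⟨e₀, he₀⟩ := Finset.card_pos.1 hd1
      have hE'ss : E.filter (fun e => u ∉ e) ⊂ E := by
        refine (Finset.ssubset_iff_of_subset (Finset.filter_subset _ _)).2
          ⟨e₀, (Finset.mem_filter.1 he₀).1, ?_⟩
        intro hmem
        exact (Finset.mem_filter.1 hmem).2 (Finset.mem_filter.1 he₀).2
      have hcov0 : ∀ v ∈ U' \ D.biUnion id, ∃ e ∈ E.filter (fun e => u ∉ e), v ∈ e := by
        intro v hv
        rcases Finset.mem_sdiff.1 hv with ⟨hvU, hnb⟩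
        rcases hcov v hvU with ⟨e, he, hve⟩
        refine ⟨e, Finset.mem_filter.2 ⟨he, fun hue => hnb ?_⟩, hve⟩
        exact Finset.mem_biUnion.2 ⟨e, Finset.mem_filter.2 ⟨he, hue⟩, hve⟩
      have hIH := IH _ hE'ss (fun f hf => hsize f (Finset.filter_subset _ _ hf))
        (U' \ D.biUnion id) hcov0 (U' ∩ D.biUnion id)
      rw [Finset.sdiff_union_inter] at hIH
      have hcard : ((2:ℝ)) ^ ((U' ∩ D.biUnion id).card) ≤ β ^ d := by
        have hsub2 : U' ∩ D.biUnion id ⊆ D.biUnion (fun e => e.erase u) := by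
          intro v hv
          rcases Finset.mem_inter.1 hv with ⟨hvU, hvb⟩
          rcases Finset.mem_biUnion.1 hvb with ⟨f, hf, hvf⟩
          exact Finset.mem_biUnion.2 ⟨f, hf, Finset.mem_erase.2 ⟨fun h => hu (h ▸ hvU), hvf⟩⟩
        have h1 : (U' ∩ D.biUnion id).card ≤ ∑ f ∈ D, (f.erase u).card :=
          (Finset.card_le_card hsub2).trans (Finset.card_biUnion_le)
        calc (2:ℝ) ^ (U' ∩ D.biUnion id).card ≤ 2 ^ (∑ f ∈ D, (f.erase u).card) :=
              pow_le_pow_right₀ one_le_two h1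
          _ = ∏ f ∈ D, (2:ℝ) ^ (f.erase u).card := by
              rw [← Finset.prod_pow_eq_pow_sum]
          _ ≤ ∏ f ∈ D, β := by
              apply Finset.prod_le_prod
              · intro f _; positivity
              · intro f hf
                exact hpow f u (f.erase u) (Finset.mem_filter.1 hf).2
                  (hsize f (Finset.mem_filter.1 hf).1) (Finset.Subset.refl _)
          _ = β ^ d := by rw [Finset.prod_const, hddef]
      calc ‖Zc z U' (E.filter (fun e => u ∉ e))‖
          ≤ 2 ^ ((U' ∩ D.biUnion id).card) * ‖Zc z (U' \ D.biUnion id) (E.filter (fun e => u ∉ e))‖ := hIH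
        _ ≤ β ^ d * ‖Zc z (U' \ D.biUnion id) (E.filter (fun e => u ∉ e))‖ :=
            mul_le_mul_of_nonneg_right hcard (norm_nonneg _)
        _ ≤ (R - β) ^ d * ‖Zc z (U' \ D.biUnion id) (E.filter (fun e => u ∉ e))‖ := by
            apply mul_le_mul_of_nonneg_right _ (norm_nonneg _)
            exact pow_le_pow_left₀ (le_of_lt hβpos) hββ d
        _ ≤ ‖Zc z U' E‖ := hchain
  -- adding one required vertex at most doubles the absolute value
  have D1 : ∀ (S : Finset V), (∀ v ∈ S, ∃ e ∈ E, v ∈ e) → ∀ u : V,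
      ‖Zc z (insert u S) E‖ ≤ 2 * ‖Zc z S E‖ := by
    intro S hcov u
    by_cases hu : u ∈ S
    · rw [Finset.insert_eq_self.2 hu]
      nlinarith [norm_nonneg (Zc z S E)]
    · have hv := Zc_vertex z S E u
      have heq : Zc z (insert u S) E = Zc z S E - Zc z S (E.filter fun e => u ∉ e) := by
        rw [hv]; ring
      rw [heq, sub_eq_add_neg]
      calc ‖Zc z S E + -Zc z S (E.filter fun e => u ∉ e)‖
          ≤ ‖Zc z S E‖ + ‖-Zc z S (E.filter fun e => u ∉ e)‖ :=
            norm_add_le _ _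
        _ = ‖Zc z S E‖ + ‖Zc z S (E.filter fun e => u ∉ e)‖ := by
            rw [norm_neg]
        _ ≤ 2 * ‖Zc z S E‖ := by
            have := Rstep S hcov u hu
            linarith
  -- final induction on W
  intro W
  induction W using Finset.induction with
  | empty => simp
  | @insert w W hw ihW =>
    rw [Finset.union_insert, Finset.card_insert_of_notMem hw, pow_succ]
    by_cases hcov2 : ∀ v ∈ U ∪ W, ∃ e ∈ E, v ∈ e
    · calc ‖Zc z (insert w (U ∪ W)) E‖
          ≤ 2 * ‖Zc z (U ∪ W) E‖ := D1 (U ∪ W) hcov2 w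
        _ ≤ 2 * (2 ^ W.card * ‖Zc z U E‖) := by linarith
        _ = 2 ^ W.card * 2 * ‖Zc z U E‖ := by ring
    · push_neg at hcov2
      obtain ⟨v, hv, hnv⟩ := hcov2
      rw [Zc_of_not_coverable z E (Finset.mem_insert_of_mem hv) hnv]
      simp only [norm_zero]
      positivity

end Analytic

section Final

variable {V : Type} [Fintype V] [DecidableEq V]

lemma Zc_ne_zero (k : ℕ) (z : ℂ) (hz : (2:ℝ)^k < ‖z‖) :
    ∀ E : Finset (Finset V), (∀ e ∈ E, e.card ≤ k) →
      ∀ U : Finset V, (∀ v ∈ U, ∃ e ∈ E, v ∈ e) → Zc z U E ≠ 0 := by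
  intro E
  induction E using Finset.strongInduction with
  | _ E IH =>
  intro hsize U hcov
  have h2k1 : (1:ℝ) ≤ 2^k := one_le_pow₀ one_le_two
  by_cases hU : U = ∅
  · subst hU
    rw [Zc_empty_left]
    apply pow_ne_zero
    intro h0
    have hz1 : z = -1 := by linear_combination h0
    rw [hz1] at hz
    simp at hz
    linarith
  · obtain ⟨u, hu⟩ := Finset.nonempty_iff_ne_empty.2 hU
    obtain ⟨e, he, hue⟩ := hcov u hu
    have hsize' : ∀ f ∈ E.erase e, f.card ≤ k :=
      fun f hf => hsize f (Finset.mem_of_mem_erase hf)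
    have hcov' : ∀ v ∈ U \ e, ∃ e' ∈ E.erase e, v ∈ e' := by
      intro v hv
      rcases Finset.mem_sdiff.1 hv with ⟨hvU, hve⟩
      rcases hcov v hvU with ⟨e', he', hve'⟩
      exact ⟨e', Finset.mem_erase.2 ⟨fun h => hve (h ▸ hve'), he'⟩, hve'⟩
    have hD := Dmono k z hz (E.erase e) hsize' (U \ e) hcov' (U ∩ e)
    rw [Finset.sdiff_union_inter] at hD
    have step := Cgen_aux z U E he hD
    have hpos : 0 < ‖z‖ - (2:ℝ)^((U ∩ e).card) := by
      have h1 : (U ∩ e).card ≤ k :=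
        (Finset.card_le_card (Finset.inter_subset_right)).trans (hsize e he)
      have h2 : (2:ℝ)^((U ∩ e).card) ≤ 2^k := pow_le_pow_right₀ one_le_two h1
      linarith
    have hrec : Zc z (U \ e) (E.erase e) ≠ 0 :=
      IH (E.erase e) (Finset.erase_ssubset he) hsize' (U \ e) hcov'
    have habs : 0 < ‖Zc z (U \ e) (E.erase e)‖ := norm_pos_iff.2 hrec
    have hfin : 0 < ‖Zc z U E‖ := lt_of_lt_of_le (mul_pos hpos habs) step
    intro h
    rw [h] at hfin
    simp at hfin

end Final

/-- If every edge of the hypergraph has size at most `k` and there are no isolated vertices,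
then the edge cover polynomial is nonzero whenever `|z| > 2^k`. -/
theorem hypEdgeCoverPoly_ne_zero_of_abs_gt
    {V : Type} [Fintype V] [DecidableEq V] (E : Finset (Finset V)) (k : ℕ)
    (hsize : ∀ e ∈ E, e.card ≤ k)
    (hiso : ∀ v : V, ∃ e ∈ E, v ∈ e)
    (z : ℂ) (hz : (2 : ℝ) ^ k < ‖z‖) :
    hypEdgeCoverPoly E z ≠ 0 := by
  have hEq : hypEdgeCoverPoly E z = Zc z Finset.univ E := by
    unfold hypEdgeCoverPoly Zc
    congr 1
    apply Finset.filter_congr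
    intro F _
    simp
  rw [hEq]
  exact Zc_ne_zero k z hz E hsize Finset.univ (fun v _ => hiso v)
end

section
/- Let G be a finite simple graph with no isolated vertices. Then for every complex number z with |z| ≥ 4, the edge cover polynomial satisfies E(G, z) ≠ 0. -/
open Finset

/-- The edge cover polynomial of a finite simple graph `G`, evaluated at `z`:
the sum of `z^{|F|}` over all subsets `F` of the edge set covering every vertex. -/
noncomputable def edgeCoverPoly {V : Type*} [Fintype V] [DecidableEq V]
    (G : SimpleGraph V) [DecidableRel G.Adj] (z : ℂ) : ℂ :=
  ∑ F ∈ G.edgeFinset.powerset.filter (fun F => ∀ v : V, ∃ e ∈ F, v ∈ e), z ^ F.card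

namespace EdgeCoverAux

variable {V : Type} [Fintype V] [DecidableEq V]

open Classical in
/-- Partition function of complements of partial edge covers: sum over `D ⊆ E` such
that every vertex of `A` is incident to some edge of `E \ D`, of `y ^ |D|`. -/
noncomputable def covZ (y : ℂ) (E : Finset (Sym2 V)) (A : Finset V) : ℂ :=
  ∑ D ∈ E.powerset, if (∀ v ∈ A, ∃ f ∈ E, v ∈ f ∧ f ∉ D) then y ^ D.card else 0

lemma covZ_empty (y : ℂ) (E : Finset (Sym2 V)) : covZ y E ∅ = (1 + y) ^ E.card := by
  classical
  unfold covZ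
  simp only [Finset.notMem_empty, false_implies, implies_true, if_true]
  have h := Finset.prod_add (fun _ : Sym2 V => y) (fun _ : Sym2 V => 1) E
  simp only [Finset.prod_const, Finset.prod_const_one, mul_one] at h
  rw [add_comm y 1] at h
  simp only [one_pow, mul_one] at h
  exact h.symm

lemma covZ_isolated {y : ℂ} {E : Finset (Sym2 V)} {A : Finset V} {v : V}
    (hv : v ∈ A) (hiso : ∀ f ∈ E, v ∉ f) : covZ y E A = 0 := by
  classical
  unfold covZ
  refine Finset.sum_eq_zero fun D _ => ?_
  rw [if_neg]
  intro h
  obtain ⟨f, hf, hvf, -⟩ := h v hv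
  exact hiso f hf hvf

/-- The fundamental deletion recursion. -/
lemma covZ_rec (y : ℂ) (E : Finset (Sym2 V)) (A : Finset V) (a b : V)
    (hab : s(a, b) ∈ E) :
    covZ y E A
      = covZ y (E.erase s(a, b)) ((A.erase a).erase b)
        + y * covZ y (E.erase s(a, b)) A := by
  classical
  set e : Sym2 V := s(a, b) with he
  set E' : Finset (Sym2 V) := E.erase e with hE'
  have heE' : e ∉ E' := Finset.notMem_erase _ _
  have hins : insert e E' = E := Finset.insert_erase hab
  have key := Finset.sum_powerset_insert heE'
    (f := fun D : Finset (Sym2 V) =>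
      if (∀ v ∈ A, ∃ f ∈ E, v ∈ f ∧ f ∉ D) then y ^ D.card else 0)
  have lhs_eq : covZ y E A
      = ∑ D ∈ E'.powerset, (if (∀ v ∈ A, ∃ f ∈ E, v ∈ f ∧ f ∉ D) then y ^ D.card else 0)
        + ∑ D ∈ E'.powerset,
            (if (∀ v ∈ A, ∃ f ∈ E, v ∈ f ∧ f ∉ insert e D) then y ^ (insert e D).card else 0) := by
    unfold covZ
    rw [← hins] at *
    exact key
  rw [lhs_eq]
  congr 1
  · -- first sum equals covZ y E' ((A.erase a).erase b)
    unfold covZ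
    refine Finset.sum_congr rfl fun D hD => ?_
    have hDsub : D ⊆ E' := Finset.mem_powerset.mp hD
    have heD : e ∉ D := fun h => heE' (hDsub h)
    refine if_congr ?_ rfl rfl
    constructor
    · intro h w hw
      have hwA : w ∈ A := Finset.mem_of_mem_erase (Finset.mem_of_mem_erase hw)
      have hwa : w ≠ a := Finset.ne_of_mem_erase (Finset.mem_of_mem_erase hw)
      have hwb : w ≠ b := Finset.ne_of_mem_erase hw
      obtain ⟨f, hf, hwf, hfD⟩ := h w hwA
      have hfe : f ≠ e := by
        intro hfeq
        rw [hfeq, he, Sym2.mem_iff] at hwf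
        tauto
      exact ⟨f, Finset.mem_erase.mpr ⟨hfe, hf⟩, hwf, hfD⟩
    · intro h w hw
      by_cases hwa : w = a
      · exact ⟨e, hab, by rw [he, hwa]; exact Sym2.mem_mk_left a b, heD⟩
      by_cases hwb : w = b
      · exact ⟨e, hab, by rw [he, hwb]; exact Sym2.mem_mk_right a b, heD⟩
      obtain ⟨f, hf, hwf, hfD⟩ :=
        h w (Finset.mem_erase.mpr ⟨hwb, Finset.mem_erase.mpr ⟨hwa, hw⟩⟩)
      exact ⟨f, Finset.mem_of_mem_erase hf, hwf, hfD⟩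
  · -- second sum equals y * covZ y E' A
    unfold covZ
    rw [Finset.mul_sum]
    refine Finset.sum_congr rfl fun D hD => ?_
    have hDsub : D ⊆ E' := Finset.mem_powerset.mp hD
    have heD : e ∉ D := fun h => heE' (hDsub h)
    have hcard : (insert e D).card = D.card + 1 := Finset.card_insert_of_notMem heD
    have hiff : (∀ v ∈ A, ∃ f ∈ E, v ∈ f ∧ f ∉ insert e D)
        ↔ (∀ v ∈ A, ∃ f ∈ E', v ∈ f ∧ f ∉ D) := by
      constructor
      · intro h w hw
        obtain ⟨f, hf, hwf, hfD⟩ := h w hw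
        have hfe : f ≠ e := fun hfeq => hfD (by rw [hfeq]; exact Finset.mem_insert_self _ _)
        exact ⟨f, Finset.mem_erase.mpr ⟨hfe, hf⟩, hwf,
          fun hfD' => hfD (Finset.mem_insert_of_mem hfD')⟩
      · intro h w hw
        obtain ⟨f, hf, hwf, hfD⟩ := h w hw
        have hfe : f ≠ e := (Finset.mem_erase.mp hf).1
        refine ⟨f, Finset.mem_of_mem_erase hf, hwf, ?_⟩
        rw [Finset.mem_insert]
        tauto
    by_cases hcond : ∀ v ∈ A, ∃ f ∈ E', v ∈ f ∧ f ∉ D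
    · rw [if_pos (hiff.mpr hcond), if_pos hcond, hcard, pow_succ, mul_comm (y ^ D.card) y]
    · rw [if_neg (fun h => hcond (hiff.mp h)), if_neg hcond, mul_zero]

/-- Triangle inequality helpers. -/
lemma abs_le_add (a b : ℂ) : ‖a‖ ≤ ‖a - b‖ + ‖b‖ := by
  have h := norm_add_le (a - b) b
  have he : a - b + b = a := by ring
  rwa [he] at h

lemma abs_lower (a b : ℂ) : ‖a‖ - ‖b‖ ≤ ‖a + b‖ := by
  have h := norm_add_le (a + b) (-b)
  have he : a + b + -b = a := by ring
  rw [he, norm_neg] at h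
  linarith

lemma one_add_ne_zero {y : ℂ} (hy : ‖y‖ ≤ 1 / 4) : (1 : ℂ) + y ≠ 0 := by
  intro h
  have h2 := abs_lower 1 y
  rw [h, norm_zero, norm_one] at h2
  linarith

/-- The main inequality, by strong induction on the number of edges. -/
lemma key (y : ℂ) (hy : ‖y‖ ≤ 1 / 4) :
    ∀ (n : ℕ) (E : Finset (Sym2 V)), E.card ≤ n →
      ∀ (A : Finset V) (v : V), (∀ e ∈ E, ¬ e.IsDiag) →
        (∀ w ∈ A, ∃ e ∈ E, w ∈ e) → v ∈ A →
        ‖covZ y E A - covZ y E (A.erase v)‖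
          < ‖covZ y E (A.erase v)‖ := by
  intro n
  induction n with
  | zero =>
    intro E hcard A v hE hdeg hv
    obtain ⟨e, he, -⟩ := hdeg v hv
    rw [Finset.card_eq_zero.mp (Nat.le_zero.mp hcard)] at he
    exact absurd he (Finset.notMem_empty e)
  | succ n ih =>
    intro E hcard A v hE hdeg hv
    obtain ⟨e, heE, hve⟩ := hdeg v hv
    obtain ⟨u, rfl⟩ := Sym2.mem_iff_exists.mp hve
    have hvu : v ≠ u := by
      intro h
      exact hE _ heE (by rw [Sym2.mk_isDiag_iff]; exact h)
    set E' : Finset (Sym2 V) := E.erase s(v, u) with hE'def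
    have hcard' : E'.card ≤ n := by
      have h1 : E'.card = E.card - 1 := Finset.card_erase_of_mem heE
      have h2 : 1 ≤ E.card := Finset.card_pos.mpr ⟨_, heE⟩
      omega
    have hE'diag : ∀ f ∈ E', ¬ f.IsDiag := fun f hf => hE f (Finset.mem_of_mem_erase hf)
    have S1 : ∀ A' : Finset V, (∀ w ∈ A', ∃ f ∈ E', w ∈ f) → covZ y E' A' ≠ 0 := by
      intro A' hA'
      rcases A'.eq_empty_or_nonempty with rfl | ⟨w, hw⟩
      · rw [covZ_empty]
        exact pow_ne_zero _ (one_add_ne_zero hy)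
      · intro h0
        have h := ih E' hcard' A' w hE'diag hA' hw
        rw [h0, zero_sub, norm_neg] at h
        exact lt_irrefl _ h
    have hmem : ∀ w ∈ A, w ≠ v → w ≠ u → ∃ f ∈ E', w ∈ f := by
      intro w hw hwv hwu
      obtain ⟨f, hf, hwf⟩ := hdeg w hw
      refine ⟨f, Finset.mem_erase.mpr ⟨?_, hf⟩, hwf⟩
      intro hfe
      rw [hfe, Sym2.mem_iff] at hwf
      tauto
    have rec1 : covZ y E A = covZ y E' ((A.erase v).erase u) + y * covZ y E' A :=
      covZ_rec y E A v u heE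
    have rec2 : covZ y E (A.erase v)
        = covZ y E' ((A.erase v).erase u) + y * covZ y E' (A.erase v) := by
      have h := covZ_rec y E (A.erase v) v u heE
      rwa [Finset.erase_idem] at h
    set c0 : ℂ := covZ y E' ((A.erase v).erase u) with hc0
    set c1 : ℂ := covZ y E' (A.erase v) with hc1
    set c2 : ℂ := covZ y E' A with hc2
    by_cases hcase : u ∈ A ∧ ∀ f ∈ E', u ∉ f
    · have hc1z : c1 = 0 :=
        covZ_isolated (Finset.mem_erase.mpr ⟨Ne.symm hvu, hcase.1⟩) hcase.2
      have hc2z : c2 = 0 := covZ_isolated hcase.1 hcase.2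
      have hc0ne : c0 ≠ 0 := by
        refine S1 _ fun w hw => ?_
        exact hmem w (Finset.mem_of_mem_erase (Finset.mem_of_mem_erase hw))
          (Finset.ne_of_mem_erase (Finset.mem_of_mem_erase hw)) (Finset.ne_of_mem_erase hw)
      rw [rec1, rec2, hc1z, hc2z]
      simp only [mul_zero, add_zero, sub_self, norm_zero]
      exact norm_pos_iff.mpr hc0ne
    · have hu' : u ∈ A → ∃ f ∈ E', u ∈ f := by
        intro huA
        by_contra hno
        push_neg at hno
        exact hcase ⟨huA, hno⟩
      have valid' : ∀ w ∈ A.erase v, ∃ f ∈ E', w ∈ f := by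
        intro w hw
        have hwv := Finset.ne_of_mem_erase hw
        have hwA := Finset.mem_of_mem_erase hw
        by_cases hwu : w = u
        · subst hwu; exact hu' hwA
        · exact hmem w hwA hwv hwu
      have hstep1 : ‖c1‖ < 2 * ‖c0‖ ∧ (0:ℝ) < ‖c0‖ := by
        by_cases huA : u ∈ A
        · have h := ih E' hcard' (A.erase v) u hE'diag valid'
            (Finset.mem_erase.mpr ⟨Ne.symm hvu, huA⟩)
          have hpos : (0:ℝ) < ‖c0‖ :=
            lt_of_le_of_lt (norm_nonneg _) h
          have htr := abs_le_add c1 c0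
          exact ⟨by linarith, hpos⟩
        · have hBeq : (A.erase v).erase u = A.erase v :=
            Finset.erase_eq_of_notMem (fun h => huA (Finset.mem_of_mem_erase h))
          have heq : c0 = c1 := by rw [hc0, hc1, hBeq]
          have hc0ne : c0 ≠ 0 := by
            rw [heq, hc1]; exact S1 _ valid'
          have hpos := norm_pos_iff.mpr hc0ne
          rw [← heq]
          exact ⟨by linarith, hpos⟩
      obtain ⟨hc1lt, hc0pos⟩ := hstep1
      have hstep2 : ‖c2 - c1‖ ≤ ‖c1‖ := by
        by_cases hvdeg : ∃ f ∈ E', v ∈ f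
        · have valid'' : ∀ w ∈ A, ∃ f ∈ E', w ∈ f := by
            intro w hw
            by_cases hwv : w = v
            · subst hwv; exact hvdeg
            by_cases hwu : w = u
            · subst hwu; exact hu' hw
            · exact hmem w hw hwv hwu
          exact (ih E' hcard' A v hE'diag valid'' hv).le
        · push_neg at hvdeg
          have hz : c2 = 0 := covZ_isolated hv hvdeg
          rw [hz, zero_sub, norm_neg]
      rw [rec1, rec2]
      have goal_eq : (c0 + y * c2) - (c0 + y * c1) = y * (c2 - c1) := by ring
      rw [goal_eq]
      have h1 : ‖y * (c2 - c1)‖ ≤ (1/4) * ‖c1‖ := by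
        rw [norm_mul]
        exact mul_le_mul hy hstep2 (norm_nonneg _) (by norm_num)
      have hyc1 : ‖y * c1‖ ≤ (1/4) * ‖c1‖ := by
        rw [norm_mul]
        exact mul_le_mul_of_nonneg_right hy (norm_nonneg _)
      have h2 := abs_lower c0 (y * c1)
      linarith

lemma covZ_ne_zero (y : ℂ) (hy : ‖y‖ ≤ 1 / 4) (E : Finset (Sym2 V))
    (hE : ∀ e ∈ E, ¬ e.IsDiag) (A : Finset V) (hdeg : ∀ w ∈ A, ∃ e ∈ E, w ∈ e) :
    covZ y E A ≠ 0 := by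
  rcases A.eq_empty_or_nonempty with rfl | ⟨w, hw⟩
  · rw [covZ_empty]
    exact pow_ne_zero _ (one_add_ne_zero hy)
  · intro h0
    have h := key y hy E.card E le_rfl A w hE hdeg hw
    rw [h0, zero_sub, norm_neg] at h
    exact lt_irrefl _ h

end EdgeCoverAux

/-- If `G` has no isolated vertices, then its edge cover polynomial is nonzero
whenever `|z| ≥ 4`. -/
theorem edgeCoverPoly_ne_zero_of_four_le_abs
    {V : Type} [Fintype V] [DecidableEq V] (G : SimpleGraph V) [DecidableRel G.Adj]
    (hiso : ∀ v : V, ∃ u : V, G.Adj v u)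
    (z : ℂ) (hz : 4 ≤ ‖z‖) :
    edgeCoverPoly G z ≠ 0 := by
  classical
  have hz0 : z ≠ 0 := by
    intro h
    rw [h, norm_zero] at hz
    linarith
  have hy : ‖z⁻¹‖ ≤ 1 / 4 := by
    rw [norm_inv]
    have h4 : (0:ℝ) < 4 := by norm_num
    have := inv_anti₀ h4 hz
    linarith
  set E : Finset (Sym2 V) := G.edgeFinset with hEdef
  have hEdiag : ∀ e ∈ E, ¬ e.IsDiag := fun e he =>
    G.not_isDiag_of_mem_edgeSet (SimpleGraph.mem_edgeFinset.mp he)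
  have hdeg : ∀ w ∈ (Finset.univ : Finset V), ∃ e ∈ E, w ∈ e := by
    intro w _
    obtain ⟨x, hadj⟩ := hiso w
    exact ⟨s(w, x), SimpleGraph.mem_edgeFinset.mpr hadj, Sym2.mem_mk_left w x⟩
  have hcov : EdgeCoverAux.covZ z⁻¹ E Finset.univ ≠ 0 :=
    EdgeCoverAux.covZ_ne_zero z⁻¹ hy E hEdiag Finset.univ hdeg
  have hid : edgeCoverPoly G z = z ^ E.card * EdgeCoverAux.covZ z⁻¹ E Finset.univ := by
    unfold edgeCoverPoly EdgeCoverAux.covZ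
    rw [Finset.sum_filter, Finset.mul_sum]
    refine Finset.sum_nbij' (i := fun F => E \ F) (j := fun D => E \ D)
      (fun F hF => ?_) (fun D hD => ?_) (fun F hF => ?_) (fun D hD => ?_) (fun F hF => ?_)
    · exact Finset.mem_powerset.mpr (Finset.sdiff_subset)
    · exact Finset.mem_powerset.mpr (Finset.sdiff_subset)
    · exact Finset.sdiff_sdiff_eq_self (Finset.mem_powerset.mp hF)
    · exact Finset.sdiff_sdiff_eq_self (Finset.mem_powerset.mp hD)
    · have hFE : F ⊆ E := Finset.mem_powerset.mp hF
      have hiff : (∀ v : V, ∃ e ∈ F, v ∈ e)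
          ↔ (∀ v ∈ (Finset.univ : Finset V), ∃ f ∈ E, v ∈ f ∧ f ∉ E \ F) := by
        constructor
        · intro h w _
          obtain ⟨f, hf, hwf⟩ := h w
          exact ⟨f, hFE hf, hwf, fun hmem => (Finset.mem_sdiff.mp hmem).2 hf⟩
        · intro h w
          obtain ⟨f, hf, hwf, hfD⟩ := h w (Finset.mem_univ w)
          have : f ∈ F := by
            by_contra hfF
            exact hfD (Finset.mem_sdiff.mpr ⟨hf, hfF⟩)
          exact ⟨f, this, hwf⟩
      by_cases hcond : ∀ v : V, ∃ e ∈ F, v ∈ e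
      · rw [if_pos hcond, if_pos (hiff.mp hcond)]
        have hcards : (E \ F).card = E.card - F.card := Finset.card_sdiff_of_subset hFE
        have hle : F.card ≤ E.card := Finset.card_le_card hFE
        rw [hcards, inv_pow]
        have hne : z ^ (E.card - F.card) ≠ 0 := pow_ne_zero _ hz0
        rw [eq_comm, mul_inv_eq_iff_eq_mul₀ hne, ← pow_add]
        congr 1
        omega
      · rw [if_neg hcond, if_neg (fun h => hcond (hiff.mpr h)), mul_zero]
  rw [hid]
  exact mul_ne_zero (pow_ne_zero _ hz0) hcov
end

section
/- Let G be a finite simple graph with no isolated vertices. Then every complex root of the edge cover polynomial E(G, z) is contained in the set {−(1−α)² : α ∈ ℂ, |α| ≤ 1}. -/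
open Finset

/-! ### Auxiliary analytic lemmas -/

/-- Pointwise disk inequality from an endpoint condition. -/
lemma key_pointwise (w : ℂ) (s : ℝ) (hs0 : 0 < s) (hs1 : s < 1)
    (hfin : 0 ≤ (s^2 * (‖w‖)^2 - 1) + (s^2 - 1) * s^2
      - 2*s*(‖1 - w‖ + (1 - s^2) * ‖w‖)) :
    ∀ R : ℂ, ‖R‖ ≤ s → ‖1 - R‖ ≤ s * ‖w - R‖ := by
  intro R hR
  have ht0 : 0 ≤ ‖R‖ := norm_nonneg R
  have habs : ∀ u v : ℝ, 0 ≤ u → 0 ≤ v → u ^ 2 ≤ v ^ 2 → u ≤ v := by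
    intro u v hu hv h; nlinarith
  refine habs _ _ (norm_nonneg _) (by positivity) ?_
  rw [mul_pow, Complex.sq_norm, Complex.sq_norm]
  have hA : w.re ^ 2 + w.im ^ 2 = (‖w‖) ^ 2 := by
    rw [Complex.sq_norm, Complex.normSq_apply]; ring
  have f3 : R.re ^ 2 + R.im ^ 2 = (‖R‖) ^ 2 := by
    rw [Complex.sq_norm, Complex.normSq_apply]; ring
  have f1 : R.re * (1 - s^2 * w.re) - R.im * (s^2 * w.im)
      ≥ -(‖R‖ * ‖1 - (s^2:ℝ) * w‖) := by
    have hre : (R * (1 - (s^2:ℝ) * (starRingEnd ℂ) w)).re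
        = R.re * (1 - s^2 * w.re) - R.im * (s^2 * w.im) := by
      simp only [Complex.mul_re, Complex.mul_im, Complex.sub_re, Complex.sub_im,
        Complex.conj_re, Complex.conj_im, Complex.ofReal_re, Complex.ofReal_im,
        Complex.one_re, Complex.one_im]
      ring
    have h1 : -(‖R * (1 - (s^2:ℝ) * (starRingEnd ℂ) w)‖)
        ≤ (R * (1 - (s^2:ℝ) * (starRingEnd ℂ) w)).re :=
      le_trans (neg_le_neg (Complex.abs_re_le_norm _)) (neg_abs_le _)
    have h2 : ‖R * (1 - (s^2:ℝ) * (starRingEnd ℂ) w)‖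
        = ‖R‖ * ‖1 - (s^2:ℝ) * w‖ := by
      rw [norm_mul]
      congr 1
      have : (1 - (s^2:ℝ) * (starRingEnd ℂ) w) = (starRingEnd ℂ) (1 - (s^2:ℝ) * w) := by
        simp [map_sub, map_mul, Complex.conj_ofReal]
      rw [this, Complex.norm_conj]
    rw [hre, h2] at h1
    linarith
  have f2 : ‖1 - (s^2:ℝ) * w‖ ≤ ‖1 - w‖ + (1 - s^2) * ‖w‖ := by
    have hdecomp : (1 - (s^2:ℝ) * w) = (1 - w) + ((1 - s^2 : ℝ) : ℂ) * w := by
      push_cast; ring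
    calc ‖1 - (s^2:ℝ) * w‖
        ≤ ‖1 - w‖ + ‖((1 - s^2 : ℝ) : ℂ) * w‖ := by
          rw [hdecomp]; exact norm_add_le _ _
      _ = ‖1 - w‖ + (1 - s^2) * ‖w‖ := by
          rw [norm_mul, Complex.norm_real, Real.norm_eq_abs, abs_of_nonneg (by nlinarith : (0:ℝ) ≤ 1 - s^2)]
  have f12 : 2 * (R.re * (1 - s^2 * w.re) - R.im * (s^2 * w.im))
      ≥ -(2 * ‖R‖ * (‖1 - w‖ + (1 - s^2) * ‖w‖)) := by
    have h := mul_le_mul_of_nonneg_left f2 ht0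
    nlinarith
  have expand : s^2 * Complex.normSq (w - R) - Complex.normSq (1 - R)
      = (s^2 * (‖w‖)^2 - 1) + (s^2 - 1) * (R.re^2 + R.im^2)
        + 2 * (R.re * (1 - s^2 * w.re) - R.im * (s^2 * w.im)) := by
    simp only [Complex.normSq_apply, Complex.sub_re, Complex.sub_im, Complex.one_re,
      Complex.one_im]
    linear_combination (s^2) * hA
  have hts : (s^2 - 1) * (‖R‖)^2
        - 2 * ‖R‖ * (‖1 - w‖ + (1 - s^2) * ‖w‖)
      ≥ (s^2 - 1) * s^2 - 2*s*(‖1 - w‖ + (1 - s^2) * ‖w‖) := by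
    have hq0 : 0 ≤ ‖1 - w‖ + (1 - s^2) * ‖w‖ := by
      have h3 : 0 ≤ (1 - s^2) * ‖w‖ :=
        mul_nonneg (by nlinarith) (norm_nonneg w)
      have := norm_nonneg (1 - w)
      linarith
    have h1 : 0 ≤ (s - ‖R‖) * (‖1 - w‖ + (1 - s^2) * ‖w‖) :=
      mul_nonneg (by linarith) hq0
    have h2 : 0 ≤ (1 - s^2) * (s^2 - (‖R‖)^2) := by
      apply mul_nonneg (by nlinarith)
      nlinarith
    nlinarith
  nlinarith [expand, f12, hts, hfin, f3]


set_option maxHeartbeats 1000000 in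
lemma key_exists (z : ℂ) (hc : 2 * ‖z‖ < ‖z‖ ^ 2 + 2 * z.re) :
    ∃ s : ℝ, 0 < s ∧ s < 1 ∧ ∀ R : ℂ, ‖R‖ ≤ s →
      ‖1 - R‖ ≤ s * ‖(1 + z) - R‖ := by
  have hp0 : 0 ≤ ‖z‖ := norm_nonneg z
  have hU0 : 0 ≤ ‖1 + z‖ := norm_nonneg _
  have hU2 : (‖1 + z‖) ^ 2 = 1 + 2 * z.re + (‖z‖) ^ 2 := by
    rw [Complex.sq_norm, Complex.sq_norm, Complex.normSq_apply, Complex.normSq_apply]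
    simp only [Complex.add_re, Complex.add_im, Complex.one_re, Complex.one_im]
    ring
  -- abbreviations as plain reals
  obtain ⟨U, hUdef⟩ : ∃ U : ℝ, U = ‖1 + z‖ := ⟨_, rfl⟩
  obtain ⟨p, hpdef⟩ : ∃ p : ℝ, p = ‖z‖ := ⟨_, rfl⟩
  rw [← hUdef] at hU2 hU0
  rw [← hpdef] at hp0 hU2
  rw [← hpdef] at hc
  have hg0 : 0 < U^2 - 1 - 2*p := by nlinarith
  have hU1 : 1 < U := by nlinarith
  obtain ⟨g, hgdef⟩ : ∃ g : ℝ, g = U^2 - 1 - 2*p := ⟨_, rfl⟩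
  obtain ⟨s, hsdef⟩ : ∃ s : ℝ, s = 1 - g / (16 * U^2) := ⟨_, rfl⟩
  have hgg : 0 < g := hgdef ▸ hg0
  have hgU : g ≤ U^2 := by rw [hgdef]; nlinarith
  have hε16 : g / (16 * U^2) ≤ 1/16 := by
    rw [div_le_iff₀ (by positivity)]; nlinarith
  have hε0 : 0 < g / (16 * U^2) := by positivity
  have hs0 : 0 < s := by rw [hsdef]; linarith
  have hs1 : s < 1 := by rw [hsdef]; linarith
  have hshalf : (1:ℝ)/2 ≤ s := by rw [hsdef]; linarith
  refine ⟨s, hs0, hs1, ?_⟩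
  have habs1w : ‖1 - (1 + z)‖ = p := by
    rw [hpdef]
    have h : (1:ℂ) - (1 + z) = -z := by ring
    rw [h]
    exact norm_neg z
  refine key_pointwise (1 + z) s hs0 hs1 ?_
  rw [habs1w, ← hUdef]
  -- final algebra: 0 ≤ (s²U²−1) + (s²−1)s² − 2s(p + (1−s²)U)
  have h2p : 2 * p = U^2 - 1 - g := by rw [hgdef]; ring
  have hεs : g / (16 * U^2) = 1 - s := by rw [hsdef]; ring
  have hid : (s^2 * U^2 - 1) + (s^2 - 1) * s^2 - 2*s*(p + (1-s^2)*U)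
      = s * g - (1-s) * (s * U^2 + 1 + s^2*(1+s) + 2*s*(1+s)*U) := by
    linear_combination (-s) * h2p
  have hbr : s * U^2 + 1 + s^2*(1+s) + 2*s*(1+s)*U ≤ 8 * U^2 := by
    have hU2' : 1 ≤ U^2 := by nlinarith
    have b1 : s * U^2 ≤ U^2 := by nlinarith
    have b2 : s^2*(1+s) ≤ 2 := by nlinarith
    have b3 : 2*s*(1+s)*U ≤ 4*U := by nlinarith
    have b4 : (4:ℝ)*U ≤ 4*U^2 := by nlinarith
    linarith
  have hε8 : (1-s) * (8 * U^2) = g / 2 := by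
    rw [← hεs]; field_simp; ring
  have hmul : (1-s) * (s * U^2 + 1 + s^2*(1+s) + 2*s*(1+s)*U) ≤ (1-s) * (8 * U^2) :=
    mul_le_mul_of_nonneg_left hbr (by linarith)
  rw [hid]
  nlinarith


/-! ### The generalized cover polynomial and its recursions -/

variable {V : Type} [Fintype V] [DecidableEq V]

/-- Generalized edge-cover sum: subsets `F` of `E` covering every vertex of `S`. -/
noncomputable def Pcov (z : ℂ) (E : Finset (Sym2 V)) (S : Finset V) : ℂ :=
  ∑ F ∈ E.powerset.filter (fun F => ∀ v ∈ S, ∃ e ∈ F, v ∈ e), z ^ F.card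

lemma Pcov_empty (z : ℂ) (E : Finset (Sym2 V)) : Pcov z E ∅ = (z + 1) ^ E.card := by
  unfold Pcov
  rw [Finset.filter_true_of_mem (by simp)]
  have h := Finset.prod_add (fun _ : Sym2 V => z) (fun _ : Sym2 V => (1:ℂ)) E
  simp only [Finset.prod_const, Finset.prod_const_one, one_pow, mul_one] at h
  exact h.symm

lemma Pcov_isolated (z : ℂ) (E : Finset (Sym2 V)) (S : Finset V) (x : V) (hx : x ∈ S)
    (hiso : ∀ e ∈ E, x ∉ e) : Pcov z E S = 0 := by
  unfold Pcov
  rw [Finset.filter_false_of_mem, Finset.sum_empty]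
  intro F hF hcov
  obtain ⟨e, heF, hxe⟩ := hcov x hx
  exact hiso e (Finset.mem_powerset.mp hF heF) hxe

/-- Splitting at a vertex `u ∉ S`. -/
lemma Pcov_insert_vertex (z : ℂ) (E : Finset (Sym2 V)) (S : Finset V) (u : V) (hu : u ∉ S) :
    Pcov z E (insert u S) = Pcov z E S - Pcov z (E.filter (fun e => u ∉ e)) S := by
  have hsplit := Finset.sum_filter_add_sum_filter_not
    (E.powerset.filter (fun F => ∀ v ∈ S, ∃ e ∈ F, v ∈ e))
    (fun F => ∃ e ∈ F, u ∈ e) (fun F => (z : ℂ) ^ F.card)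
  have h1 : (E.powerset.filter (fun F => ∀ v ∈ S, ∃ e ∈ F, v ∈ e)).filter
      (fun F => ∃ e ∈ F, u ∈ e)
      = E.powerset.filter (fun F => ∀ v ∈ insert u S, ∃ e ∈ F, v ∈ e) := by
    rw [Finset.filter_filter]
    apply Finset.filter_congr
    intro F _
    rw [Finset.forall_mem_insert]
    tauto
  have h2 : (E.powerset.filter (fun F => ∀ v ∈ S, ∃ e ∈ F, v ∈ e)).filter
      (fun F => ¬ ∃ e ∈ F, u ∈ e)
      = (E.filter (fun e => u ∉ e)).powerset.filter (fun F => ∀ v ∈ S, ∃ e ∈ F, v ∈ e) := by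
    ext F
    simp only [Finset.mem_filter, Finset.mem_powerset, Finset.subset_iff, Finset.mem_filter]
    constructor
    · rintro ⟨⟨hFE, hcov⟩, hne⟩
      push_neg at hne
      exact ⟨fun {e} he => ⟨hFE he, hne e he⟩, hcov⟩
    · rintro ⟨hFE, hcov⟩
      refine ⟨⟨fun {e} he => (hFE he).1, hcov⟩, ?_⟩
      push_neg
      intro e he
      exact (hFE he).2
  unfold Pcov
  rw [← h1, ← h2] at *
  linear_combination hsplit


/-- Inserting an edge `s(u,v)` with `u ∉ S`. -/
lemma Pcov_insert_edge (z : ℂ) (E : Finset (Sym2 V)) (S : Finset V) (u v : V)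
    (hu : u ∉ S) (he : s(u,v) ∉ E) :
    Pcov z (insert s(u,v) E) S = Pcov z E S + z * Pcov z E (S.erase v) := by
  unfold Pcov
  rw [Finset.sum_filter, Finset.sum_filter, Finset.sum_filter]
  rw [Finset.sum_powerset_insert he]
  congr 1
  rw [Finset.mul_sum]
  apply Finset.sum_congr rfl
  intro F hF
  rw [Finset.mem_powerset] at hF
  have heF : s(u,v) ∉ F := fun h => he (hF h)
  have hcard : (insert s(u,v) F).card = F.card + 1 := Finset.card_insert_of_notMem heF
  have hcov : (∀ x ∈ S, ∃ e ∈ insert s(u,v) F, x ∈ e) ↔ (∀ x ∈ S.erase v, ∃ e ∈ F, x ∈ e) := by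
    constructor
    · intro h x hx
      obtain ⟨e, heF', hxe⟩ := h x (Finset.mem_of_mem_erase hx)
      rcases Finset.mem_insert.mp heF' with rfl | hmem
      · exfalso
        rcases Sym2.mem_iff.mp hxe with rfl | rfl
        · exact hu (Finset.mem_of_mem_erase hx)
        · exact (Finset.ne_of_mem_erase hx) rfl
      · exact ⟨e, hmem, hxe⟩
    · intro h x hx
      by_cases hxv : x = v
      · exact ⟨s(u,v), Finset.mem_insert_self _ _, by rw [hxv]; exact Sym2.mem_mk_right u v⟩
      · obtain ⟨e, heF', hxe⟩ := h x (Finset.mem_erase.mpr ⟨hxv, hx⟩)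
        exact ⟨e, Finset.mem_insert_of_mem heF', hxe⟩
  by_cases hc : ∀ x ∈ S.erase v, ∃ e ∈ F, x ∈ e
  · rw [if_pos (hcov.mpr hc), if_pos hc, hcard]
    ring
  · rw [if_neg (fun hh => hc (hcov.mp hh)), if_neg hc, mul_zero]


section Main

variable (z : ℂ) (s : ℝ)

/-- The inductive statement: nonvanishing and the deletion inequality. -/
def Good (S : Finset V) : Prop :=
  ∀ E : Finset (Sym2 V), (∀ x ∈ S, ∃ e ∈ E, x ∈ e) →
    Pcov z E S ≠ 0 ∧ ∀ u ∉ S, (∃ e ∈ E, u ∈ e) →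
      ‖Pcov z (E.filter (fun e => u ∉ e)) S‖ ≤ s * ‖Pcov z E S‖

variable (hs0 : 0 < s) (hs1 : s < 1)
  (hkey : ∀ R : ℂ, ‖R‖ ≤ s → ‖1 - R‖ ≤ s * ‖(1 + z) - R‖)

include hkey in
/-- The key step inequality: from `|B| ≤ s|A|`, `A ≠ 0` conclude `|A - B| ≤ s |(1+z)A - B|`. -/
lemma step_ineq (A B : ℂ) (hA : A ≠ 0) (hB : ‖B‖ ≤ s * ‖A‖) :
    ‖A - B‖ ≤ s * ‖(1 + z) * A - B‖ := by
  have hApos : 0 < ‖A‖ := norm_pos_iff.mpr hA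
  have hR : ‖B / A‖ ≤ s := by
    rw [norm_div, div_le_iff₀ hApos]
    exact hB
  have h := hkey (B / A) hR
  have h1 : (1 - B / A) * A = A - B := by field_simp
  have h2 : ((1 + z) - B / A) * A = (1 + z) * A - B := by field_simp
  calc ‖A - B‖ = ‖1 - B / A‖ * ‖A‖ := by
        rw [← norm_mul, h1]
    _ ≤ (s * ‖(1 + z) - B / A‖) * ‖A‖ :=
        mul_le_mul_of_nonneg_right h (norm_nonneg A)
    _ = s * ‖(1 + z) * A - B‖ := by
        rw [mul_assoc, ← norm_mul, h2]

include hs0 hs1 hkey in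
lemma Pcov_chain (S : Finset V) (u : V) (hu : u ∉ S)
    (IH : ∀ T ⊂ S, Good z s T)
    (Eb : Finset (Sym2 V)) (hdeg : ∀ x ∈ S, ∃ e ∈ Eb, x ∈ e) :
    ∀ D : Finset (Sym2 V), (∀ e ∈ D, u ∈ e) → Disjoint D Eb →
      ‖Pcov z Eb S‖ ≤ s ^ D.card * ‖Pcov z (Eb ∪ D) S‖ := by
  intro D
  induction D using Finset.induction_on with
  | empty => intro _ _; simp
  | @insert e D' heD' ih =>
    intro hD hdisj
    have hue : u ∈ e := hD e (Finset.mem_insert_self e D')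
    have hDu : ∀ e' ∈ D', u ∈ e' := fun e' h => hD e' (Finset.mem_insert_of_mem h)
    have hdisj' : Disjoint D' Eb :=
      Finset.disjoint_of_subset_left (Finset.subset_insert e D') hdisj
    have hmain := ih hDu hdisj'
    have heEb : e ∉ Eb := Finset.disjoint_left.mp hdisj (Finset.mem_insert_self e D')
    have heE2 : e ∉ Eb ∪ D' := by
      rw [Finset.mem_union]
      rintro (h | h)
      · exact heEb h
      · exact heD' h
    -- write e = s(u, v)
    have hespec := Sym2.other_spec hue
    have hcard : (insert e D').card = D'.card + 1 := Finset.card_insert_of_notMem heD'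
    have hunion : Eb ∪ insert e D' = insert e (Eb ∪ D') := Finset.union_insert _ _ _
    set v := Sym2.Mem.other hue with hvdef
    have hins : Pcov z (insert e (Eb ∪ D')) S
        = Pcov z (Eb ∪ D') S + z * Pcov z (Eb ∪ D') (S.erase v) := by
      rw [← hespec]
      exact Pcov_insert_edge z (Eb ∪ D') S u v hu (hespec ▸ heE2)
    by_cases hvS : v ∈ S
    · -- v must be covered
      have hTsub : S.erase v ⊂ S := Finset.erase_ssubset hvS
      obtain ⟨hA, hb⟩ := IH (S.erase v) hTsub (Eb ∪ D')
        (fun x hx => by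
          obtain ⟨e', he', hxe⟩ := hdeg x (Finset.mem_of_mem_erase hx)
          exact ⟨e', Finset.mem_union_left _ he', hxe⟩)
      have hB := hb v (Finset.notMem_erase v S)
        (by obtain ⟨e', he', hxe⟩ := hdeg v hvS
            exact ⟨e', Finset.mem_union_left _ he', hxe⟩)
      have hPS : Pcov z (Eb ∪ D') S
          = Pcov z (Eb ∪ D') (S.erase v)
            - Pcov z ((Eb ∪ D').filter (fun e => v ∉ e)) (S.erase v) := by
        conv_lhs => rw [← Finset.insert_erase hvS]
        exact Pcov_insert_vertex z (Eb ∪ D') (S.erase v) v (Finset.notMem_erase v S)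
      have hstep : ‖Pcov z (Eb ∪ D') S‖
          ≤ s * ‖Pcov z (insert e (Eb ∪ D')) S‖ := by
        rw [hins, hPS]
        have : Pcov z (Eb ∪ D') (S.erase v)
            - Pcov z ((Eb ∪ D').filter (fun e => v ∉ e)) (S.erase v)
            + z * Pcov z (Eb ∪ D') (S.erase v)
            = (1 + z) * Pcov z (Eb ∪ D') (S.erase v)
              - Pcov z ((Eb ∪ D').filter (fun e => v ∉ e)) (S.erase v) := by ring
        rw [this]
        exact step_ineq z s hkey _ _ hA hB
      calc ‖Pcov z Eb S‖ ≤ s ^ D'.card * ‖Pcov z (Eb ∪ D') S‖ := hmain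
        _ ≤ s ^ D'.card * (s * ‖Pcov z (insert e (Eb ∪ D')) S‖) :=
            mul_le_mul_of_nonneg_left hstep (by positivity)
        _ = s ^ (insert e D').card * ‖Pcov z (Eb ∪ insert e D') S‖ := by
            rw [hcard, hunion, pow_succ]; ring
    · -- v need not be covered
      have herase : S.erase v = S := Finset.erase_eq_of_notMem hvS
      have hone : 1 ≤ s * ‖1 + z‖ := by
        have := hkey 0 (by simpa using hs0.le)
        simpa using this
      have hstep : ‖Pcov z (Eb ∪ D') S‖
          ≤ s * ‖Pcov z (insert e (Eb ∪ D')) S‖ := by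
        rw [hins, herase]
        have : Pcov z (Eb ∪ D') S + z * Pcov z (Eb ∪ D') S = (1 + z) * Pcov z (Eb ∪ D') S := by
          ring
        rw [this, norm_mul]
        nlinarith [norm_nonneg (Pcov z (Eb ∪ D') S), norm_nonneg (1 + z)]
      calc ‖Pcov z Eb S‖ ≤ s ^ D'.card * ‖Pcov z (Eb ∪ D') S‖ := hmain
        _ ≤ s ^ D'.card * (s * ‖Pcov z (insert e (Eb ∪ D')) S‖) :=
            mul_le_mul_of_nonneg_left hstep (by positivity)
        _ = s ^ (insert e D').card * ‖Pcov z (Eb ∪ insert e D') S‖ := by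
            rw [hcard, hunion, pow_succ]; ring

include hs0 hs1 hkey in
lemma Pcov_good : ∀ S : Finset V, Good z s S := by
  intro S
  induction S using Finset.strongInduction with
  | _ S IH =>
    intro E hdeg
    have hw0 : (1 : ℝ) ≤ s * ‖1 + z‖ := by
      have := hkey 0 (by simpa using hs0.le)
      simpa using this
    have partb : ∀ u ∉ S, (∃ e ∈ E, u ∈ e) →
        ‖Pcov z (E.filter (fun e => u ∉ e)) S‖ ≤ s * ‖Pcov z E S‖ := by
      intro u huS hue
      by_cases hdeg2 : ∀ x ∈ S, ∃ e ∈ E.filter (fun e => u ∉ e), x ∈ e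
      · have hIH' : ∀ T ⊂ S, Good z s T := fun T hT => IH T hT
        have hDu : ∀ e ∈ E.filter (fun e => u ∈ e), u ∈ e :=
          fun e he => (Finset.mem_filter.mp he).2
        have hdisj : Disjoint (E.filter (fun e => u ∈ e)) (E.filter (fun e => u ∉ e)) :=
          Finset.disjoint_filter_filter_not E E (fun e => u ∈ e)
        have hchain := Pcov_chain z s hs0 hs1 hkey S u huS hIH'
          (E.filter (fun e => u ∉ e)) hdeg2 (E.filter (fun e => u ∈ e)) hDu hdisj
        have hunion : E.filter (fun e => u ∉ e) ∪ E.filter (fun e => u ∈ e) = E := by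
          rw [Finset.union_comm]
          exact Finset.filter_union_filter_not_eq (fun e => u ∈ e) E
        rw [hunion] at hchain
        obtain ⟨e0, he0E, hue0⟩ := hue
        have hcard1 : 1 ≤ (E.filter (fun e => u ∈ e)).card := by
          rw [Nat.one_le_iff_ne_zero, ← Nat.pos_iff_ne_zero, Finset.card_pos]
          exact ⟨e0, Finset.mem_filter.mpr ⟨he0E, hue0⟩⟩
        have hpow : s ^ (E.filter (fun e => u ∈ e)).card ≤ s :=
          by simpa using pow_le_pow_of_le_one hs0.le hs1.le hcard1
        calc ‖Pcov z (E.filter (fun e => u ∉ e)) S‖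
            ≤ s ^ (E.filter (fun e => u ∈ e)).card * ‖Pcov z E S‖ := hchain
          _ ≤ s * ‖Pcov z E S‖ :=
              mul_le_mul_of_nonneg_right hpow (norm_nonneg _)
      · push_neg at hdeg2
        obtain ⟨x, hxS, hxiso⟩ := hdeg2
        rw [Pcov_isolated z _ S x hxS (by
          intro e he
          exact hxiso e he)]
        simp only [norm_zero]
        positivity
    refine ⟨?_, partb⟩
    rcases Finset.eq_empty_or_nonempty S with rfl | ⟨u, huS⟩
    · rw [Pcov_empty]
      apply pow_ne_zero
      intro h0
      rw [show (z + 1 : ℂ) = 1 + z by ring] at h0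
      rw [h0] at hw0
      simp at hw0
      linarith
    · have hTsub : S.erase u ⊂ S := Finset.erase_ssubset huS
      obtain ⟨hA, hb⟩ := IH (S.erase u) hTsub E
        (fun x hx => hdeg x (Finset.mem_of_mem_erase hx))
      have hB := hb u (Finset.notMem_erase u S) (hdeg u huS)
      have hPS : Pcov z E S
          = Pcov z E (S.erase u) - Pcov z (E.filter (fun e => u ∉ e)) (S.erase u) := by
        conv_lhs => rw [← Finset.insert_erase huS]
        exact Pcov_insert_vertex z E (S.erase u) u (Finset.notMem_erase u S)
      rw [hPS]
      intro h0
      have hAB : Pcov z E (S.erase u) = Pcov z (E.filter (fun e => u ∉ e)) (S.erase u) :=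
        sub_eq_zero.mp h0
      rw [← hAB] at hB
      have hApos : 0 < ‖Pcov z E (S.erase u)‖ := norm_pos_iff.mpr hA
      nlinarith

end Main


lemma edgeCoverPoly_eq_Pcov {V : Type} [Fintype V] [DecidableEq V]
    (G : SimpleGraph V) [DecidableRel G.Adj] (z : ℂ) :
    edgeCoverPoly G z = Pcov z G.edgeFinset Finset.univ := by
  unfold edgeCoverPoly Pcov
  congr 1
  apply Finset.filter_congr
  intro F _
  simp

-- cardioid algebra: from the in-cardioid inequality produce α
lemma cardioid_mem (z : ℂ) (hc : ‖z‖ ^ 2 + 2 * z.re ≤ 2 * ‖z‖) :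
    ∃ α : ℂ, ‖α‖ ≤ 1 ∧ z = -(1 - α) ^ 2 := by
  obtain ⟨b0, hb0⟩ := IsAlgClosed.exists_pow_nat_eq (k := ℂ) (-z) (n := 2) (by norm_num)
  obtain ⟨b, hb, hbre⟩ : ∃ b : ℂ, b ^ 2 = -z ∧ 0 ≤ b.re := by
    rcases le_or_gt 0 b0.re with h | h
    · exact ⟨b0, hb0, h⟩
    · exact ⟨-b0, by rw [neg_pow]; simp [hb0], by simp [Complex.neg_re]; linarith⟩
  refine ⟨1 - b, ?_, by rw [show (1 : ℂ) - (1 - b) = b by ring]; rw [hb]; ring⟩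
  -- |1 - b| ≤ 1  ⟺  |z| ≤ 2 b.re
  have hnsq : Complex.normSq b = ‖z‖ := by
    have h1 : ‖b ^ 2‖ = ‖z‖ := by rw [hb]; exact norm_neg z
    rw [norm_pow] at h1
    rw [← Complex.sq_norm]
    nlinarith [norm_nonneg b, norm_nonneg z]
  have hre2 : b.re ^ 2 - b.im ^ 2 = -z.re := by
    have := congrArg Complex.re hb
    simpa [pow_two, Complex.mul_re] using this
  have hsum : b.re ^ 2 + b.im ^ 2 = ‖z‖ := by
    rw [← hnsq, Complex.normSq_apply]; ring
  have h4 : (2 * b.re) ^ 2 = 2 * ‖z‖ - 2 * z.re := by nlinarith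
  have habsz : ‖z‖ ≤ 2 * b.re := by nlinarith [norm_nonneg z]
  -- conclude
  have : ‖1 - b‖ ^ 2 ≤ 1 := by
    rw [Complex.sq_norm, Complex.normSq_apply]
    simp only [Complex.sub_re, Complex.sub_im, Complex.one_re, Complex.one_im]
    nlinarith
  nlinarith [norm_nonneg (1 - b)]


/-- If `G` has no isolated vertices, then every complex root of its edge cover polynomial
lies in the cardioid-like set `{-(1-α)² : |α| ≤ 1}`. -/
theorem edgeCoverPoly_roots_mem_cardioid
    {V : Type} [Fintype V] [DecidableEq V] (G : SimpleGraph V) [DecidableRel G.Adj]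
    (hiso : ∀ v : V, ∃ u : V, G.Adj v u)
    (z : ℂ) (hz : edgeCoverPoly G z = 0) :
    ∃ α : ℂ, ‖α‖ ≤ 1 ∧ z = -(1 - α) ^ 2 := by
  by_cases hc : ‖z‖ ^ 2 + 2 * z.re ≤ 2 * ‖z‖
  · exact cardioid_mem z hc
  · exfalso
    push_neg at hc
    obtain ⟨s, hs0, hs1, hkey⟩ := key_exists z hc
    have hdeg : ∀ x ∈ (Finset.univ : Finset V), ∃ e ∈ G.edgeFinset, x ∈ e := by
      intro x _
      obtain ⟨u, hu⟩ := hiso x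
      exact ⟨s(x,u), by rw [SimpleGraph.mem_edgeFinset, SimpleGraph.mem_edgeSet]; exact hu,
        Sym2.mem_mk_left x u⟩
    have hne := (Pcov_good z s hs0 hs1 hkey Finset.univ G.edgeFinset hdeg).1
    rw [edgeCoverPoly_eq_Pcov] at hz
    exact hne hz
end

section
/- Let H be a finite hypergraph in which every edge is nonempty and every vertex is contained in at most Δ edges. Then for every complex number z with |z| < 2^{−Δ}, the independence polynomial satisfies I(H, z) ≠ 0. -/
open Finset

/-- The independence polynomial of a hypergraph with vertex set `V` and edge collection `E`,
evaluated at `z`: the sum of `z^{|A|}` over all sets `A ⊆ V` containing no edge of `E`. -/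
noncomputable def hypIndepPoly {V : Type*} [Fintype V] [DecidableEq V]
    (E : Finset (Finset V)) (z : ℂ) : ℂ :=
  ∑ A ∈ (univ : Finset (Finset V)).filter (fun A => ∀ e ∈ E, ¬ e ⊆ A), z ^ A.card

noncomputable abbrev Complex.abs : AbsoluteValue ℂ ℝ := NormedField.toAbsoluteValue ℂ

namespace HypAux

set_option linter.unusedSectionVars false
set_option linter.unusedVariables false
set_option maxHeartbeats 1000000

variable {V : Type} [Fintype V] [DecidableEq V]

/-- Independence polynomial of the hypergraph induced on `T`. -/
noncomputable def ip (E : Finset (Finset V)) (T : Finset V) (z : ℂ) : ℂ :=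
  ∑ A ∈ T.powerset.filter (fun A => ∀ e ∈ E, ¬ e ⊆ A), z ^ A.card

lemma ip_congr {E E' : Finset (Finset V)} {T : Finset V} (z : ℂ)
    (h : ∀ A ⊆ T, (∀ e ∈ E, ¬ e ⊆ A) ↔ (∀ e ∈ E', ¬ e ⊆ A)) : ip E T z = ip E' T z := by
  unfold ip
  congr 1
  apply filter_congr
  intro A hA
  simpa using h A (mem_powerset.1 hA)

lemma ip_zero_of_empty_mem {E : Finset (Finset V)} {T : Finset V} (z : ℂ)
    (h : (∅ : Finset V) ∈ E) : ip E T z = 0 := by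
  unfold ip
  rw [filter_false_of_mem, sum_empty]
  intro A _ hA
  exact hA ∅ h (empty_subset A)

lemma ip_empty {E : Finset (Finset V)} (z : ℂ) (h : ∀ e ∈ E, e.Nonempty) :
    ip E (∅ : Finset V) z = 1 := by
  unfold ip
  rw [powerset_empty, filter_true_of_mem, sum_singleton, card_empty, pow_zero]
  intro A hA
  rw [mem_singleton] at hA
  subst hA
  intro e he hsub
  exact (h e he).ne_empty (subset_empty.1 hsub)

lemma indep_insert_iff {E : Finset (Finset V)} {B : Finset V} {v : V} (hvB : v ∉ B) :
    (∀ e ∈ E, ¬ e ⊆ insert v B) ↔ (∀ f ∈ E.image (fun e => e.erase v), ¬ f ⊆ B) := by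
  constructor
  · intro h f hf hsub
    obtain ⟨e, he, rfl⟩ := mem_image.1 hf
    refine h e he ?_
    intro x hx
    by_cases hxv : x = v
    · exact hxv ▸ mem_insert_self v B
    · exact mem_insert_of_mem (hsub (mem_erase.2 ⟨hxv, hx⟩))
  · intro h e he hsub
    refine h (e.erase v) (mem_image.2 ⟨e, he, rfl⟩) ?_
    intro x hx
    have hx' := mem_erase.1 hx
    rcases mem_insert.1 (hsub hx'.2) with h1 | h1
    · exact absurd h1 hx'.1
    · exact h1

lemma ip_vertex_insert (E : Finset (Finset V)) {T' : Finset V} {v : V} (hv : v ∉ T') (z : ℂ) :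
    ip E (insert v T') z
      = ip E T' z + z * ip (E.image fun e => e.erase v) T' z := by
  unfold ip
  rw [sum_filter, sum_filter, sum_filter, sum_powerset_insert hv]
  congr 1
  rw [mul_sum]
  refine sum_congr rfl ?_
  intro A hA
  have hvA : v ∉ A := fun h => hv (mem_powerset.mp hA h)
  have hcard : (insert v A).card = A.card + 1 := card_insert_of_notMem hvA
  have hiff := indep_insert_iff (E := E) hvA
  by_cases h : ∀ f ∈ E.image (fun e => e.erase v), ¬ f ⊆ A
  · rw [if_pos (hiff.mpr h), if_pos h, hcard, pow_succ]
    ring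
  · rw [if_neg (fun hc => h (hiff.mp hc)), if_neg h, mul_zero]

lemma ip_vertex (E : Finset (Finset V)) {T : Finset V} {v : V} (hv : v ∈ T) (z : ℂ) :
    ip E T z = ip E (T.erase v) z + z * ip (E.image fun e => e.erase v) (T.erase v) z := by
  have h := ip_vertex_insert E (notMem_erase v T) (z := z)
  rwa [insert_erase hv] at h

lemma ip_edge {G : Finset (Finset V)} {f T : Finset V} (hfT : f ⊆ T)
    (hGf : ∀ e ∈ G, ¬ e ⊆ f) (z : ℂ) :
    ip (insert f G) T z
      = ip G T z - z ^ f.card * ip (G.image fun e => e \ f) (T \ f) z := by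
  have hsplit :
      (∑ A ∈ (T.powerset.filter (fun A => ∀ e ∈ G, ¬ e ⊆ A)).filter (fun A => f ⊆ A),
          z ^ A.card)
      + (∑ A ∈ (T.powerset.filter (fun A => ∀ e ∈ G, ¬ e ⊆ A)).filter (fun A => ¬ f ⊆ A),
          z ^ A.card)
      = ip G T z :=
    sum_filter_add_sum_filter_not _ _ _
  have h2 : (T.powerset.filter (fun A => ∀ e ∈ G, ¬ e ⊆ A)).filter (fun A => ¬ f ⊆ A)
      = T.powerset.filter (fun A => ∀ e ∈ insert f G, ¬ e ⊆ A) := by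
    rw [filter_filter]
    apply filter_congr
    intro A hA
    simp only [forall_mem_insert]
    tauto
  have h3 : (∑ A ∈ (T.powerset.filter (fun A => ∀ e ∈ G, ¬ e ⊆ A)).filter (fun A => f ⊆ A),
          z ^ A.card)
      = z ^ f.card * ip (G.image fun e => e \ f) (T \ f) z := by
    rw [ip, mul_sum]
    refine sum_bij' (fun A _ => A \ f) (fun B _ => B ∪ f) ?_ ?_ ?_ ?_ ?_
    · intro A hA
      simp only [mem_filter, mem_powerset] at hA ⊢
      obtain ⟨⟨hAT, hind⟩, hfA⟩ := hA
      refine ⟨sdiff_subset_sdiff hAT Subset.rfl, ?_⟩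
      intro g hg hsub
      obtain ⟨e, he, rfl⟩ := mem_image.1 hg
      refine hind e he ?_
      intro x hx
      by_cases hxf : x ∈ f
      · exact hfA hxf
      · exact (mem_sdiff.1 (hsub (mem_sdiff.2 ⟨hx, hxf⟩))).1
    · intro B hB
      simp only [mem_filter, mem_powerset] at hB ⊢
      obtain ⟨hBT, hind⟩ := hB
      refine ⟨⟨union_subset ((subset_sdiff.1 hBT).1) hfT, ?_⟩, subset_union_right⟩
      intro e he hsub
      refine hind (e \ f) (mem_image.2 ⟨e, he, rfl⟩) ?_
      intro x hx
      have hx' := mem_sdiff.1 hx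
      rcases mem_union.1 (hsub hx'.1) with h1 | h1
      · exact h1
      · exact absurd h1 hx'.2
    · intro A hA
      simp only [mem_filter] at hA
      exact sdiff_union_of_subset hA.2
    · intro B hB
      simp only [mem_filter, mem_powerset] at hB
      exact union_sdiff_cancel_right (subset_sdiff.1 hB.1).2
    · intro A hA
      simp only [mem_filter] at hA
      have : (A \ f).card + f.card = A.card := card_sdiff_add_card_eq_card hA.2
      rw [← this, pow_add]
      ring
  have hlhs : ip (insert f G) T z
      = ∑ A ∈ T.powerset.filter (fun A => ∀ e ∈ insert f G, ¬ e ⊆ A), z ^ A.card := rfl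
  rw [hlhs, ← h2, ← hsplit, h3]
  ring

lemma abs_lower {a b : ℂ} {c : ℝ} (h : Complex.abs (a - b) ≤ c * Complex.abs b) :
    (1 - c) * Complex.abs b ≤ Complex.abs a := by
  have h1 : Complex.abs (b - 0) ≤ Complex.abs (b - a) + Complex.abs (a - 0) :=
    Complex.abs.sub_le b a 0
  have h2 : Complex.abs (b - a) = Complex.abs (a - b) := by
    rw [AbsoluteValue.map_sub]
  simp only [sub_zero] at h1
  nlinarith [AbsoluteValue.nonneg Complex.abs b]

lemma abs_sub_le_add (a b : ℂ) : Complex.abs (a - b) ≤ Complex.abs a + Complex.abs b := by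
  have := Complex.abs.add_le a (-b)
  simpa [sub_eq_add_neg] using this

lemma half_bound {Δ : ℕ} {z : ℂ} (hz : Complex.abs z < (2 : ℝ) ^ (-(Δ : ℤ))) (hΔ : 1 ≤ Δ)
    {d : ℕ} (hd : d ≤ Δ - 1) : (2 : ℝ) ^ d * Complex.abs z ≤ 1 / 2 := by
  have h2 : (2 : ℝ) ^ (-(Δ : ℤ)) = ((2 : ℝ) ^ (Δ : ℕ))⁻¹ := by
    rw [zpow_neg, zpow_natCast]
  have hlt : Complex.abs z ≤ ((2 : ℝ) ^ (Δ : ℕ))⁻¹ := by rw [h2] at hz; linarith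
  have hpow : (2 : ℝ) ^ d ≤ (2 : ℝ) ^ (Δ - 1) := pow_le_pow_right₀ (by norm_num) hd
  have hsucc : Δ - 1 + 1 = Δ := Nat.succ_pred_eq_of_pos hΔ
  have h2Δ : (2 : ℝ) ^ (Δ : ℕ) = (2 : ℝ) ^ (Δ - 1) * 2 := by
    rw [← pow_succ, hsucc]
  calc (2 : ℝ) ^ d * Complex.abs z ≤ (2 : ℝ) ^ (Δ - 1) * ((2 : ℝ) ^ (Δ : ℕ))⁻¹ := by
        apply mul_le_mul hpow hlt (AbsoluteValue.nonneg _ _) (by positivity)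
    _ = 1 / 2 := by rw [h2Δ]; field_simp

lemma one_bound {Δ : ℕ} {z : ℂ} (hz : Complex.abs z < (2 : ℝ) ^ (-(Δ : ℤ)))
    {d : ℕ} (hd : d ≤ Δ) : (2 : ℝ) ^ d * Complex.abs z < 1 := by
  have h2 : (2 : ℝ) ^ (-(Δ : ℤ)) = ((2 : ℝ) ^ (Δ : ℕ))⁻¹ := by
    rw [zpow_neg, zpow_natCast]
  have hpow : (2 : ℝ) ^ d ≤ (2 : ℝ) ^ Δ := pow_le_pow_right₀ (by norm_num) hd
  have hpos : (0 : ℝ) < (2 : ℝ) ^ d := by positivity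
  calc (2 : ℝ) ^ d * Complex.abs z < (2 : ℝ) ^ d * ((2 : ℝ) ^ (Δ : ℕ))⁻¹ := by
        apply mul_lt_mul_of_pos_left (h2 ▸ hz) hpos
    _ ≤ (2 : ℝ) ^ Δ * ((2 : ℝ) ^ (Δ : ℕ))⁻¹ := by
        apply mul_le_mul_of_nonneg_right hpow (by positivity)
    _ = 1 := by field_simp

lemma deg_mono {E E' : Finset (Finset V)} (h : E ⊆ E') (u : V) :
    (E.filter (fun e => u ∈ e)).card ≤ (E'.filter (fun e => u ∈ e)).card :=
  card_le_card (filter_subset_filter _ h)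

lemma deg_image_le (E : Finset (Finset V)) (g : Finset V → Finset V)
    (hg : ∀ e, g e ⊆ e) (u : V) :
    ((E.image g).filter (fun e => u ∈ e)).card ≤ (E.filter (fun e => u ∈ e)).card := by
  have hsub : (E.image g).filter (fun e => u ∈ e) ⊆ (E.filter (fun e => u ∈ e)).image g := by
    intro a ha
    simp only [mem_filter, mem_image] at ha ⊢
    obtain ⟨⟨e, he, rfl⟩, hu⟩ := ha
    exact ⟨e, ⟨he, hg e hu⟩, rfl⟩
  exact (card_le_card hsub).trans card_image_le

lemma card_filter_erase {E : Finset (Finset V)} {e : Finset V} (he : e ∈ E) {u : V}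
    (hu : u ∈ e) :
    (((E.erase e)).filter (fun x => u ∈ x)).card = (E.filter (fun x => u ∈ x)).card - 1 := by
  rw [filter_erase, card_erase_of_mem (mem_filter.2 ⟨he, hu⟩)]

lemma add_edges {Δ : ℕ} {z : ℂ} {T : Finset V}
    (hB : ∀ (G : Finset (Finset V)) (f : Finset V), (∀ e ∈ G, e.Nonempty) → f.Nonempty →
        (∀ u, ((insert f G).filter (fun e => u ∈ e)).card ≤ Δ) →
        (∀ u ∈ f, (G.filter (fun e => u ∈ e)).card ≤ Δ - 1) →
        Complex.abs (ip (insert f G) T z) ≤ 2 * Complex.abs (ip G T z))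
    (E₀ : Finset (Finset V)) :
    ∀ F : Finset (Finset V),
      (∀ e ∈ E₀ ∪ F, e.Nonempty) →
      (∀ u, ((E₀ ∪ F).filter (fun e => u ∈ e)).card ≤ Δ) →
      (∀ g ∈ F, g ∉ E₀ → ∀ u ∈ g,
          (((E₀ ∪ F).erase g).filter (fun e => u ∈ e)).card ≤ Δ - 1) →
      Complex.abs (ip (E₀ ∪ F) T z) ≤ 2 ^ F.card * Complex.abs (ip E₀ T z) := by
  intro F
  induction F using Finset.induction_on with
  | empty => intro _ _ _; simp
  | @insert f F hfF ih =>
    intro hne hdeg hfd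
    have hsub : E₀ ∪ F ⊆ E₀ ∪ insert f F := union_subset_union_right (subset_insert f F)
    have hne' : ∀ e ∈ E₀ ∪ F, e.Nonempty := fun e he => hne e (hsub he)
    have hdeg' : ∀ u, ((E₀ ∪ F).filter (fun e => u ∈ e)).card ≤ Δ := fun u =>
      le_trans (card_le_card (filter_subset_filter _ hsub)) (hdeg u)
    have hfd' : ∀ g ∈ F, g ∉ E₀ → ∀ u ∈ g,
        (((E₀ ∪ F).erase g).filter (fun e => u ∈ e)).card ≤ Δ - 1 := by
      intro g hg hgE u hu
      refine le_trans (card_le_card (filter_subset_filter _ (erase_subset_erase _ hsub)))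
        (hfd g (mem_insert_of_mem hg) hgE u hu)
    have hcard : (insert f F).card = F.card + 1 := card_insert_of_notMem hfF
    have hmain := ih hne' hdeg' hfd'
    have hEins : E₀ ∪ insert f F = insert f (E₀ ∪ F) := union_insert f E₀ F
    by_cases hmem : f ∈ E₀ ∪ F
    · have : E₀ ∪ insert f F = E₀ ∪ F := by
        rw [hEins, insert_eq_self.2 hmem]
      rw [this, hcard]
      calc Complex.abs (ip (E₀ ∪ F) T z) ≤ 2 ^ F.card * Complex.abs (ip E₀ T z) := hmain
        _ ≤ 2 ^ (F.card + 1) * Complex.abs (ip E₀ T z) := by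
            apply mul_le_mul_of_nonneg_right _ (AbsoluteValue.nonneg _ _)
            apply pow_le_pow_right₀ (by norm_num) (Nat.le_succ _)
    · have hstep := hB (E₀ ∪ F) f hne'
        (hne f (mem_union_right _ (mem_insert_self f F)))
        (by intro u; rw [← hEins]; exact hdeg u)
        (by
          intro u hu
          have h1 := hfd f (mem_insert_self f F) (fun hc => hmem (mem_union_left _ hc)) u hu
          rwa [hEins, erase_insert hmem] at h1)
      rw [hEins, hcard]
      calc Complex.abs (ip (insert f (E₀ ∪ F)) T z)
          ≤ 2 * Complex.abs (ip (E₀ ∪ F) T z) := hstep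
        _ ≤ 2 * (2 ^ F.card * Complex.abs (ip E₀ T z)) := by linarith
        _ = 2 ^ (F.card + 1) * Complex.abs (ip E₀ T z) := by ring

lemma tele {Δ : ℕ} {z : ℂ} {n : ℕ} (hz : Complex.abs z < (2 : ℝ) ^ (-(Δ : ℤ))) (hΔ : 1 ≤ Δ)
    (hA : ∀ T : Finset V, T.card ≤ n → ∀ E : Finset (Finset V), (∀ e ∈ E, e.Nonempty) →
        (∀ u, (E.filter (fun e => u ∈ e)).card ≤ Δ) → ∀ v ∈ T,
        Complex.abs (ip E T z - ip E (T.erase v) z) ≤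
          2 ^ ((E.filter (fun e => v ∈ e)).card) * Complex.abs z
            * Complex.abs (ip E (T.erase v) z))
    (G : Finset (Finset V)) (hGne : ∀ e ∈ G, e.Nonempty)
    (hGdeg : ∀ u, (G.filter (fun e => u ∈ e)).card ≤ Δ) :
    ∀ f T : Finset V, T.card ≤ n → f ⊆ T →
      (∀ u ∈ f, (G.filter (fun e => u ∈ e)).card ≤ Δ - 1) →
      (1 / 2 : ℝ) ^ f.card * Complex.abs (ip G (T \ f) z) ≤ Complex.abs (ip G T z) := by
  intro f
  induction f using Finset.induction_on with
  | empty => intro T _ _ _; simp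
  | @insert u f huf ih =>
    intro T hT hsub hdeg'
    have huT : u ∈ T := hsub (mem_insert_self u f)
    have hfT : f ⊆ T := fun x hx => hsub (mem_insert_of_mem hx)
    have hTf : (T \ f).card ≤ n := le_trans (card_le_card sdiff_subset) hT
    have huTf : u ∈ T \ f := mem_sdiff.2 ⟨huT, huf⟩
    have hstepA := hA (T \ f) hTf G hGne hGdeg u huTf
    have hc : (2 : ℝ) ^ ((G.filter (fun e => u ∈ e)).card) * Complex.abs z ≤ 1 / 2 :=
      half_bound hz hΔ (hdeg' u (mem_insert_self u f))
    have hstep : (1 / 2 : ℝ) * Complex.abs (ip G ((T \ f).erase u) z)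
        ≤ Complex.abs (ip G (T \ f) z) := by
      have := abs_lower (le_trans hstepA (by
        apply mul_le_mul_of_nonneg_right hc (AbsoluteValue.nonneg _ _)))
      linarith [AbsoluteValue.nonneg Complex.abs (ip G ((T \ f).erase u) z)]
    have hins : T \ insert u f = (T \ f).erase u := by
      ext x
      simp only [mem_sdiff, mem_erase, mem_insert]
      tauto
    have hih := ih T hT hfT (fun x hx => hdeg' x (mem_insert_of_mem hx))
    rw [hins, card_insert_of_notMem huf, pow_succ]
    calc (1 / 2 : ℝ) ^ f.card * (1 / 2)
          * Complex.abs (ip G ((T \ f).erase u) z)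
        = (1 / 2 : ℝ) ^ f.card
          * ((1 / 2) * Complex.abs (ip G ((T \ f).erase u) z)) := by ring
      _ ≤ (1 / 2 : ℝ) ^ f.card * Complex.abs (ip G (T \ f) z) := by
          apply mul_le_mul_of_nonneg_left hstep (by positivity)
      _ ≤ Complex.abs (ip G T z) := hih

lemma mega {Δ : ℕ} {z : ℂ} (hz : Complex.abs z < (2 : ℝ) ^ (-(Δ : ℤ))) :
    ∀ n : ℕ, ∀ T : Finset V, T.card ≤ n →
      ((∀ E : Finset (Finset V), (∀ e ∈ E, e.Nonempty) →
          (∀ u, (E.filter (fun e => u ∈ e)).card ≤ Δ) → ∀ v ∈ T,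
          Complex.abs (ip E T z - ip E (T.erase v) z) ≤
            2 ^ ((E.filter (fun e => v ∈ e)).card) * Complex.abs z
              * Complex.abs (ip E (T.erase v) z))
       ∧ (∀ (G : Finset (Finset V)) (f : Finset V), (∀ e ∈ G, e.Nonempty) → f.Nonempty →
          (∀ u, ((insert f G).filter (fun e => u ∈ e)).card ≤ Δ) →
          (∀ u ∈ f, (G.filter (fun e => u ∈ e)).card ≤ Δ - 1) →
          Complex.abs (ip (insert f G) T z) ≤ 2 * Complex.abs (ip G T z))) := by
  intro n
  induction n using Nat.strong_induction_on with
  | _ n IH =>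
    -- First establish statement (A) for all `T` of card at most `n`.
    have hA : ∀ T : Finset V, T.card ≤ n → ∀ E : Finset (Finset V), (∀ e ∈ E, e.Nonempty) →
        (∀ u, (E.filter (fun e => u ∈ e)).card ≤ Δ) → ∀ v ∈ T,
        Complex.abs (ip E T z - ip E (T.erase v) z) ≤
          2 ^ ((E.filter (fun e => v ∈ e)).card) * Complex.abs z
            * Complex.abs (ip E (T.erase v) z) := by
      intro T hT E hne hdeg v hv
      have hdiff : ip E T z - ip E (T.erase v) z
          = z * ip (E.image fun e => e.erase v) (T.erase v) z := by
        rw [ip_vertex E hv z]; ring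
      by_cases hsing : ({v} : Finset V) ∈ E
      · have h0 : ip (E.image fun e => e.erase v) (T.erase v) z = 0 :=
          ip_zero_of_empty_mem z (mem_image.2 ⟨{v}, hsing, erase_singleton v⟩)
        rw [hdiff, h0, mul_zero, map_zero]
        positivity
      · set T' := T.erase v with hT'
        set E₀ := E.filter (fun e => v ∉ e) with hE₀
        set F := (E.filter (fun e => v ∈ e)).image (fun e => e.erase v) with hF
        have himg : E₀ ∪ F = E.image (fun e => e.erase v) := by
          ext g
          simp only [hE₀, hF, mem_union, mem_filter, mem_image]
          constructor
          · rintro (⟨hg, hvg⟩ | ⟨e, ⟨he, hve⟩, rfl⟩)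
            · exact ⟨g, hg, erase_eq_of_notMem hvg⟩
            · exact ⟨e, he, rfl⟩
          · rintro ⟨e, he, rfl⟩
            by_cases hve : v ∈ e
            · exact Or.inr ⟨e, ⟨he, hve⟩, rfl⟩
            · exact Or.inl ⟨by rwa [erase_eq_of_notMem hve], notMem_erase v e⟩
        have hcong : ip E T' z = ip E₀ T' z := by
          apply ip_congr
          intro A hAT
          constructor
          · exact fun h e he => h e (mem_filter.1 he).1
          · intro h e he hsubA
            by_cases hve : v ∈ e
            · have : v ∈ T' := hAT (hsubA hve)
              exact (mem_erase.1 this).1 rfl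
            · exact h e (mem_filter.2 ⟨he, hve⟩) hsubA
        have hn1 : T'.card < n := lt_of_lt_of_le (card_erase_lt_of_mem hv) hT
        have hB' := (IH T'.card hn1 T' le_rfl).2
        -- hypotheses for add_edges
        have hne₀ : ∀ e ∈ E₀ ∪ F, e.Nonempty := by
          intro g hg
          rw [himg] at hg
          obtain ⟨e, he, rfl⟩ := mem_image.1 hg
          rw [nonempty_iff_ne_empty]
          intro hc
          rcases (erase_eq_empty_iff e v).1 hc with h1 | h1
          · exact (hne e he).ne_empty h1
          · exact hsing (h1 ▸ he)
        have hdeg₀ : ∀ u, ((E₀ ∪ F).filter (fun e => u ∈ e)).card ≤ Δ := by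
          intro u
          rw [himg]
          exact le_trans (deg_image_le E _ (fun e => erase_subset v e) u) (hdeg u)
        have hfd₀ : ∀ g ∈ F, g ∉ E₀ → ∀ u ∈ g,
            (((E₀ ∪ F).erase g).filter (fun e => u ∈ e)).card ≤ Δ - 1 := by
          intro g hg hgE u hu
          obtain ⟨e, he2, rfl⟩ := mem_image.1 hg
          have he : e ∈ E := (mem_filter.1 he2).1
          have hve : v ∈ e := (mem_filter.1 he2).2
          have hue : u ∈ e := (erase_subset v e) hu
          have hsub2 : ((E₀ ∪ F).erase (e.erase v)).filter (fun x => u ∈ x)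
              ⊆ ((E.erase e).filter (fun x => u ∈ x)).image (fun x => x.erase v) := by
            intro h hh
            have hh1 := mem_filter.1 hh
            have hh2 := mem_erase.1 hh1.1
            have hu' : u ∈ h := hh1.2
            rcases mem_union.1 hh2.2 with hh3 | hh3
            · have hh4 := mem_filter.1 hh3
              refine mem_image.2 ⟨h, mem_filter.2 ⟨mem_erase.2 ⟨?_, hh4.1⟩, hu'⟩,
                erase_eq_of_notMem hh4.2⟩
              intro hc
              exact hh4.2 (hc ▸ hve)
            · obtain ⟨e', he'2, rfl⟩ := mem_image.1 hh3
              have he' : e' ∈ E := (mem_filter.1 he'2).1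
              have hee' : e' ≠ e := fun hc => hh2.1 (by rw [hc])
              exact mem_image.2 ⟨e', mem_filter.2 ⟨mem_erase.2 ⟨hee', he'⟩,
                (erase_subset v e') hu'⟩, rfl⟩
          calc (((E₀ ∪ F).erase (e.erase v)).filter (fun x => u ∈ x)).card
              ≤ (((E.erase e).filter (fun x => u ∈ x)).image (fun x => x.erase v)).card :=
                card_le_card hsub2
            _ ≤ ((E.erase e).filter (fun x => u ∈ x)).card := card_image_le
            _ = (E.filter (fun x => u ∈ x)).card - 1 := card_filter_erase he hue
            _ ≤ Δ - 1 := Nat.sub_le_sub_right (hdeg u) 1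
        have hadd := add_edges hB' E₀ F hne₀ hdeg₀ hfd₀
        have hFcard : F.card ≤ (E.filter (fun e => v ∈ e)).card := card_image_le
        have h1 : Complex.abs (ip (E.image fun e => e.erase v) T' z)
            ≤ 2 ^ ((E.filter (fun e => v ∈ e)).card) * Complex.abs (ip E T' z) := by
          rw [← himg, hcong]
          refine le_trans hadd ?_
          apply mul_le_mul_of_nonneg_right _ (AbsoluteValue.nonneg _ _)
          exact pow_le_pow_right₀ (by norm_num) hFcard
        rw [hdiff, map_mul]
        calc Complex.abs z * Complex.abs (ip (E.image fun e => e.erase v) T' z)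
            ≤ Complex.abs z
              * (2 ^ ((E.filter (fun e => v ∈ e)).card) * Complex.abs (ip E T' z)) := by
              apply mul_le_mul_of_nonneg_left h1 (AbsoluteValue.nonneg _ _)
          _ = 2 ^ ((E.filter (fun e => v ∈ e)).card) * Complex.abs z
              * Complex.abs (ip E T' z) := by ring
    intro T hT
    refine ⟨hA T hT, ?_⟩
    -- statement (B)
    intro G f hGne hfne hdeg hfdeg
    have habs2 : (0 : ℝ) ≤ Complex.abs (ip G T z) := AbsoluteValue.nonneg _ _
    by_cases hfT : f ⊆ T
    swap
    · have heq : ip (insert f G) T z = ip G T z := by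
        apply ip_congr
        intro A hAT
        rw [forall_mem_insert]
        constructor
        · exact fun h => h.2
        · exact fun h => ⟨fun hc => hfT (hc.trans hAT), h⟩
      rw [heq]; linarith
    by_cases hGf : ∃ e ∈ G, e ⊆ f
    · obtain ⟨e, he, hef⟩ := hGf
      have heq : ip (insert f G) T z = ip G T z := by
        apply ip_congr
        intro A hAT
        rw [forall_mem_insert]
        constructor
        · exact fun h => h.2
        · exact fun h => ⟨fun hc => h e he (hef.trans hc), h⟩
      rw [heq]; linarith
    push_neg at hGf
    obtain ⟨u₀, hu₀⟩ := hfne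
    have hΔ1 : 1 ≤ Δ := by
      refine le_trans ?_ (hdeg u₀)
      rw [Nat.one_le_iff_ne_zero, ← Nat.pos_iff_ne_zero, card_pos]
      exact ⟨f, mem_filter.2 ⟨mem_insert_self f G, hu₀⟩⟩
    have hk : 1 ≤ f.card := card_pos.2 ⟨u₀, hu₀⟩
    have hGdeg : ∀ u, (G.filter (fun e => u ∈ e)).card ≤ Δ := fun u =>
      le_trans (deg_mono (subset_insert f G) u) (hdeg u)
    have hid := ip_edge hfT hGf z
    have hL := tele hz hΔ1 hA G hGne hGdeg f T hT hfT hfdeg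
    -- step U
    set G₁ := G.filter (fun e => Disjoint e f) with hG₁
    set F' := (G.filter (fun e => ¬ Disjoint e f)).image (fun e => e \ f) with hF'
    have himg2 : G₁ ∪ F' = G.image (fun e => e \ f) := by
      ext g
      simp only [hG₁, hF', mem_union, mem_filter, mem_image]
      constructor
      · rintro (⟨hg, hd⟩ | ⟨e, ⟨he, _⟩, rfl⟩)
        · exact ⟨g, hg, Finset.sdiff_eq_self_iff_disjoint.2 hd⟩
        · exact ⟨e, he, rfl⟩
      · rintro ⟨e, he, rfl⟩
        by_cases hd : Disjoint e f
        · left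
          rw [Finset.sdiff_eq_self_iff_disjoint.2 hd]
          exact ⟨he, hd⟩
        · exact Or.inr ⟨e, ⟨he, hd⟩, rfl⟩
    have hcong2 : ip G (T \ f) z = ip G₁ (T \ f) z := by
      apply ip_congr
      intro A hAT
      constructor
      · exact fun h e he => h e (mem_filter.1 he).1
      · intro h e he hsubA
        by_cases hd : Disjoint e f
        · exact h e (mem_filter.2 ⟨he, hd⟩) hsubA
        · obtain ⟨x, hxe, hxf⟩ := not_disjoint_iff.1 hd
          exact (mem_sdiff.1 (hAT (hsubA hxe))).2 hxf
    have hcard_sd : (T \ f).card < n :=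
      lt_of_lt_of_le (card_lt_card (sdiff_ssubset hfT ⟨u₀, hu₀⟩)) hT
    have hB' := (IH (T \ f).card hcard_sd (T \ f) le_rfl).2
    have hne2 : ∀ e ∈ G₁ ∪ F', e.Nonempty := by
      intro g hg
      rw [himg2] at hg
      obtain ⟨e, he, rfl⟩ := mem_image.1 hg
      exact sdiff_nonempty.2 (hGf e he)
    have hdeg2 : ∀ u, ((G₁ ∪ F').filter (fun e => u ∈ e)).card ≤ Δ := by
      intro u
      rw [himg2]
      exact le_trans (deg_image_le G _ (fun e => sdiff_subset) u) (hGdeg u)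
    have hfd2 : ∀ g ∈ F', g ∉ G₁ → ∀ u ∈ g,
        (((G₁ ∪ F').erase g).filter (fun e => u ∈ e)).card ≤ Δ - 1 := by
      intro g hg hgG u hu
      obtain ⟨e, he2, rfl⟩ := mem_image.1 hg
      have he : e ∈ G := (mem_filter.1 he2).1
      have hnd : ¬ Disjoint e f := (mem_filter.1 he2).2
      have hue : u ∈ e := (mem_sdiff.1 hu).1
      have hsub3 : ((G₁ ∪ F').erase (e \ f)).filter (fun x => u ∈ x)
          ⊆ ((G.erase e).filter (fun x => u ∈ x)).image (fun x => x \ f) := by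
        intro h hh
        have hh1 := mem_filter.1 hh
        have hh2 := mem_erase.1 hh1.1
        have hu' : u ∈ h := hh1.2
        rcases mem_union.1 hh2.2 with hh3 | hh3
        · have hh4 := mem_filter.1 hh3
          refine mem_image.2 ⟨h, mem_filter.2 ⟨mem_erase.2 ⟨?_, hh4.1⟩, hu'⟩,
            Finset.sdiff_eq_self_iff_disjoint.2 hh4.2⟩
          intro hc
          exact hnd (hc ▸ hh4.2)
        · obtain ⟨e', he'2, rfl⟩ := mem_image.1 hh3
          have he' : e' ∈ G := (mem_filter.1 he'2).1
          have hee' : e' ≠ e := fun hc => hh2.1 (by rw [hc])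
          exact mem_image.2 ⟨e', mem_filter.2 ⟨mem_erase.2 ⟨hee', he'⟩,
            (mem_sdiff.1 hu').1⟩, rfl⟩
      calc (((G₁ ∪ F').erase (e \ f)).filter (fun x => u ∈ x)).card
          ≤ (((G.erase e).filter (fun x => u ∈ x)).image (fun x => x \ f)).card :=
            card_le_card hsub3
        _ ≤ ((G.erase e).filter (fun x => u ∈ x)).card := card_image_le
        _ = (G.filter (fun x => u ∈ x)).card - 1 := card_filter_erase he hue
        _ ≤ Δ - 1 := Nat.sub_le_sub_right (hGdeg u) 1
    have hadd2 := add_edges hB' G₁ F' hne2 hdeg2 hfd2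
    have hF'card : F'.card ≤ (Δ - 1) * f.card := by
      have h1 : F'.card ≤ (G.filter (fun e => ¬ Disjoint e f)).card := card_image_le
      have hsub4 : G.filter (fun e => ¬ Disjoint e f)
          ⊆ f.biUnion (fun u => G.filter (fun e => u ∈ e)) := by
        intro e he
        have he1 := mem_filter.1 he
        obtain ⟨x, hxe, hxf⟩ := not_disjoint_iff.1 he1.2
        exact mem_biUnion.2 ⟨x, hxf, mem_filter.2 ⟨he1.1, hxe⟩⟩
      have h2 : (G.filter (fun e => ¬ Disjoint e f)).card
          ≤ ∑ u ∈ f, (G.filter (fun e => u ∈ e)).card :=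
        le_trans (card_le_card hsub4) (card_biUnion_le)
      have h3 : ∑ u ∈ f, (G.filter (fun e => u ∈ e)).card ≤ ∑ _u ∈ f, (Δ - 1) :=
        sum_le_sum hfdeg
      rw [sum_const, smul_eq_mul] at h3
      exact le_trans h1 (le_trans h2 (h3.trans (le_of_eq (Nat.mul_comm _ _))))
    have hW : Complex.abs (ip (G.image fun e => e \ f) (T \ f) z)
        ≤ 2 ^ ((Δ - 1) * f.card) * Complex.abs (ip G (T \ f) z) := by
      rw [← himg2, hcong2]
      refine le_trans hadd2 ?_
      apply mul_le_mul_of_nonneg_right _ (AbsoluteValue.nonneg _ _)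
      exact pow_le_pow_right₀ (by norm_num) hF'card
    have hhalf : Complex.abs z * (2 : ℝ) ^ (Δ - 1) ≤ 1 / 2 := by
      have := half_bound hz hΔ1 (le_refl (Δ - 1))
      linarith [this]
    have key : Complex.abs (z ^ f.card * ip (G.image fun e => e \ f) (T \ f) z)
        ≤ Complex.abs (ip G T z) := by
      rw [map_mul, map_pow]
      calc Complex.abs z ^ f.card * Complex.abs (ip (G.image fun e => e \ f) (T \ f) z)
          ≤ Complex.abs z ^ f.card
            * (2 ^ ((Δ - 1) * f.card) * Complex.abs (ip G (T \ f) z)) := by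
            apply mul_le_mul_of_nonneg_left hW (by positivity)
        _ = (Complex.abs z * (2 : ℝ) ^ (Δ - 1)) ^ f.card
            * Complex.abs (ip G (T \ f) z) := by
            rw [mul_pow, pow_mul]; ring
        _ ≤ (1 / 2 : ℝ) ^ f.card * Complex.abs (ip G (T \ f) z) := by
            apply mul_le_mul_of_nonneg_right _ (AbsoluteValue.nonneg _ _)
            exact pow_le_pow_left₀ (by positivity) hhalf f.card
        _ ≤ Complex.abs (ip G T z) := hL
    rw [hid]
    have htri := abs_sub_le_add (ip G T z)
      (z ^ f.card * ip (G.image fun e => e \ f) (T \ f) z)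
    linarith

lemma ip_ne_zero {Δ : ℕ} {z : ℂ} (hz : Complex.abs z < (2 : ℝ) ^ (-(Δ : ℤ)))
    (E : Finset (Finset V)) (hne : ∀ e ∈ E, e.Nonempty)
    (hdeg : ∀ u, (E.filter (fun e => u ∈ e)).card ≤ Δ) :
    ∀ T : Finset V, ip E T z ≠ 0 := by
  intro T
  induction T using Finset.strongInduction with
  | _ T ih =>
    rcases T.eq_empty_or_nonempty with rfl | ⟨v, hv⟩
    · rw [ip_empty z hne]; exact one_ne_zero
    · have hA := (mega hz T.card T le_rfl).1 E hne hdeg v hv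
      have hih : ip E (T.erase v) z ≠ 0 := ih (T.erase v) (erase_ssubset hv)
      have hpos : 0 < Complex.abs (ip E (T.erase v) z) :=
        AbsoluteValue.pos Complex.abs hih
      have hlt : (2 : ℝ) ^ ((E.filter (fun e => v ∈ e)).card) * Complex.abs z < 1 :=
        one_bound hz (hdeg v)
      intro h0
      rw [h0, zero_sub, Complex.abs.map_neg] at hA
      nlinarith [hA, hpos, hlt, AbsoluteValue.nonneg Complex.abs z]

end HypAux

/-- If every edge of the hypergraph is nonempty and every vertex has degree at most `Δ`,
then the independence polynomial is nonzero whenever `|z| < 2^{-Δ}`. -/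
theorem hypIndepPoly_ne_zero_of_abs_lt
    {V : Type} [Fintype V] [DecidableEq V] (E : Finset (Finset V)) (Δ : ℕ)
    (hne : ∀ e ∈ E, e.Nonempty)
    (hdeg : ∀ v : V, (E.filter (fun e => v ∈ e)).card ≤ Δ)
    (z : ℂ) (hz : ‖z‖ < (2 : ℝ) ^ (-(Δ : ℤ))) :
    hypIndepPoly E z ≠ 0 := by
  have h := HypAux.ip_ne_zero hz E hne hdeg (univ : Finset V)
  have heq : hypIndepPoly E z = HypAux.ip E (univ : Finset V) z := by
    unfold hypIndepPoly HypAux.ip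
    rw [powerset_univ]
  rwa [heq]
end

section
/- Let G be a finite simple graph without isolated vertices and with maximum degree Δ. Then every complex root z of the domination polynomial D(G, z) satisfies |z| < 2^{Δ+1}. -/
open Finset

/-- The domination polynomial of a finite simple graph `G`, evaluated at `z`:
the sum of `z^{|S|}` over all dominating sets `S` of `G`. -/
noncomputable def dominationPoly {V : Type*} [Fintype V] [DecidableEq V]
    (G : SimpleGraph V) [DecidableRel G.Adj] (z : ℂ) : ℂ :=
  ∑ S ∈ (univ : Finset (Finset V)).filter
      (fun S => ∀ u : V, u ∈ S ∨ ∃ v ∈ S, G.Adj u v), z ^ S.card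

namespace DomPolyAux

variable {V : Type*} [Fintype V] [DecidableEq V] (G : SimpleGraph V) [DecidableRel G.Adj]

/-- closed neighborhood as a finset -/
def NB (v : V) : Finset V := insert v (G.neighborFinset v)

lemma mem_NB {u v : V} : u ∈ NB G v ↔ u = v ∨ G.Adj v u := by
  simp [NB, SimpleGraph.mem_neighborFinset]

lemma self_mem_NB (v : V) : v ∈ NB G v := by simp [mem_NB]

lemma NB_symm {u v : V} : u ∈ NB G v ↔ v ∈ NB G u := by
  rw [mem_NB, mem_NB]
  constructor
  · rintro (rfl | h)
    · exact Or.inl rfl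
    · exact Or.inr h.symm
  · rintro (rfl | h)
    · exact Or.inl rfl
    · exact Or.inr h.symm

lemma card_NB (v : V) : (NB G v).card = G.degree v + 1 := by
  rw [NB, card_insert_of_notMem (by simp), SimpleGraph.degree]

/-- The restricted partition function: sum over subsets `C ⊆ W` that do not contain any
of the constraint sets `N[u] ∩ W`, `u ∈ K`, of `w ^ |C|`. -/
noncomputable def Zf (w : ℂ) (W K : Finset V) : ℂ :=
  ∑ C ∈ W.powerset, if ∀ u ∈ K, ¬ (NB G u ∩ W ⊆ C) then w ^ C.card else 0

lemma Zf_empty (w : ℂ) : Zf G w ∅ ∅ = 1 := by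
  simp [Zf]

lemma Zf_zero_of_empty_constraint (w : ℂ) {W K : Finset V} {u : V} (hu : u ∈ K)
    (h : NB G u ∩ W = ∅) : Zf G w W K = 0 := by
  unfold Zf
  apply Finset.sum_eq_zero
  intro C _
  rw [if_neg]
  intro hall
  exact hall u hu (by rw [h]; exact empty_subset _)

lemma Zf_dup (w : ℂ) {W K : Finset V} {u u' : V} (hu' : u' ∈ K)
    (h : NB G u ∩ W = NB G u' ∩ W) : Zf G w W (insert u K) = Zf G w W K := by
  unfold Zf
  apply Finset.sum_congr rfl
  intro C _
  apply if_congr _ rfl rfl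
  constructor
  · intro hall u'' hu''
    exact hall u'' (mem_insert_of_mem hu'')
  · intro hall u'' hu''
    rcases mem_insert.1 hu'' with rfl | h''
    · rw [h]; exact hall u' hu'
    · exact hall u'' h''

/-- Main recursion : splitting on whether `v ∈ C`. -/
lemma Zf_rec' (w : ℂ) {W' : Finset V} {v : V} (hv : v ∉ W') (K : Finset V) :
    Zf G w (insert v W') K = Zf G w W' (K \ NB G v) + w * Zf G w W' K := by
  unfold Zf
  rw [Finset.sum_powerset_insert hv]
  congr 1
  · -- first sum : C ⊆ W', v ∉ C
    apply Finset.sum_congr rfl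
    intro C hC
    rw [mem_powerset] at hC
    apply if_congr _ rfl rfl
    constructor
    · intro hall u hu
      have h1 := hall u (mem_sdiff.1 hu).1
      have hvNB : v ∉ NB G u := fun hvNB => (mem_sdiff.1 hu).2 ((NB_symm G).1 hvNB)
      intro hsub
      apply h1
      intro x hx
      have hx1 := (mem_inter.1 hx).1
      have hx2 := (mem_inter.1 hx).2
      rcases mem_insert.1 hx2 with rfl | hxW'
      · exact absurd hx1 hvNB
      · exact hsub (mem_inter.2 ⟨hx1, hxW'⟩)
    · intro hall u hu
      intro hsub
      by_cases huv : u ∈ NB G v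
      · have hvNB : v ∈ NB G u := (NB_symm G).1 huv
        have : v ∈ C := hsub (mem_inter.2 ⟨hvNB, mem_insert_self v W'⟩)
        exact hv (hC this)
      · apply hall u (mem_sdiff.2 ⟨hu, huv⟩)
        intro x hx
        exact hsub (mem_inter.2 ⟨(mem_inter.1 hx).1,
          mem_insert_of_mem (mem_inter.1 hx).2⟩)
  · -- second sum : C ∪ {v}
    rw [Finset.mul_sum]
    apply Finset.sum_congr rfl
    intro C hC
    rw [mem_powerset] at hC
    have hvC : v ∉ C := fun h => hv (hC h)
    have hiff : (∀ u ∈ K, ¬ (NB G u ∩ insert v W' ⊆ insert v C)) ↔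
        (∀ u ∈ K, ¬ (NB G u ∩ W' ⊆ C)) := by
      apply forall₂_congr
      intro u _
      apply not_congr
      constructor
      · intro h x hx
        have hxv : x ≠ v := fun he => hv (he ▸ (mem_inter.1 hx).2)
        have : x ∈ insert v C := h (mem_inter.2 ⟨(mem_inter.1 hx).1,
          mem_insert_of_mem (mem_inter.1 hx).2⟩)
        exact (mem_insert.1 this).resolve_left hxv
      · intro h x hx
        rcases mem_insert.1 (mem_inter.1 hx).2 with rfl | hxW'
        · exact mem_insert_self _ _
        · exact mem_insert_of_mem (h (mem_inter.2 ⟨(mem_inter.1 hx).1, hxW'⟩))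
    by_cases hcond : ∀ u ∈ K, ¬ (NB G u ∩ insert v W' ⊆ insert v C)
    · rw [if_pos hcond, if_pos (hiff.1 hcond), card_insert_of_notMem hvC, pow_succ,
        mul_comm (w ^ C.card) w]
    · rw [if_neg hcond, if_neg (fun h => hcond (hiff.2 h)), mul_zero]

lemma Zf_rec (w : ℂ) {W : Finset V} {v : V} (hv : v ∈ W) (K : Finset V) :
    Zf G w W K = Zf G w (W.erase v) (K \ NB G v) + w * Zf G w (W.erase v) K := by
  conv_lhs => rw [← insert_erase hv]
  exact Zf_rec' G w (notMem_erase v W) K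

/-- Adding a constraint. -/
lemma Zf_insert (w : ℂ) (W K : Finset V) (u : V) :
    Zf G w W (insert u K) =
      Zf G w W K - w ^ (NB G u ∩ W).card * Zf G w (W \ NB G u) K := by
  have hWE : W \ NB G u = W \ (NB G u ∩ W) := by
    ext x; simp only [mem_sdiff, mem_inter]; tauto
  set E := NB G u ∩ W with hE
  have hEW : E ⊆ W := inter_subset_right
  have step1 : Zf G w W K - Zf G w W (insert u K) =
      ∑ C ∈ W.powerset,
        if E ⊆ C then (if (∀ u' ∈ K, ¬ (NB G u' ∩ W ⊆ C)) then w ^ C.card else 0) else 0 := by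
    unfold Zf
    rw [← Finset.sum_sub_distrib]
    apply Finset.sum_congr rfl
    intro C _
    have hexp : (∀ u' ∈ insert u K, ¬ (NB G u' ∩ W ⊆ C)) ↔
        (¬ (E ⊆ C)) ∧ (∀ u' ∈ K, ¬ (NB G u' ∩ W ⊆ C)) := by
      rw [Finset.forall_mem_insert]
    by_cases h1 : ∀ u' ∈ K, ¬ (NB G u' ∩ W ⊆ C) <;> by_cases h2 : E ⊆ C <;>
      (simp only [hexp]; simp [h1, h2])
  have step2 : (∑ C ∈ W.powerset,
        if E ⊆ C then (if (∀ u' ∈ K, ¬ (NB G u' ∩ W ⊆ C)) then w ^ C.card else 0) else 0) =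
      w ^ E.card * Zf G w (W \ E) K := by
    rw [← Finset.sum_filter]
    unfold Zf
    rw [Finset.mul_sum]
    apply Finset.sum_nbij' (fun C => C \ E) (fun C => C ∪ E)
    · intro C hC
      rw [mem_filter, mem_powerset] at hC
      exact mem_powerset.2 (sdiff_subset_sdiff hC.1 (le_refl E))
    · intro C hC
      rw [mem_powerset] at hC
      refine mem_filter.2 ⟨mem_powerset.2 (union_subset (hC.trans sdiff_subset) hEW),
        subset_union_right⟩
    · intro C hC
      rw [mem_filter, mem_powerset] at hC
      exact sdiff_union_of_subset hC.2
    · intro C hC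
      rw [mem_powerset] at hC
      have hd : ∀ x ∈ C, x ∉ E := fun x hx => (mem_sdiff.1 (hC hx)).2
      ext x
      simp only [mem_sdiff, mem_union]
      constructor
      · rintro ⟨h | h, hne⟩
        · exact h
        · exact absurd h hne
      · intro hx
        exact ⟨Or.inl hx, hd x hx⟩
    · intro C hC
      rw [mem_filter, mem_powerset] at hC
      obtain ⟨hCW, hEC⟩ := hC
      have hcards : C.card = E.card + (C \ E).card := by
        rw [add_comm, Finset.card_sdiff_add_card_eq_card hEC]
      have hok : ∀ u' : V, ((NB G u' ∩ W ⊆ C) ↔ (NB G u' ∩ (W \ E) ⊆ C \ E)) := by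
        intro u'
        constructor
        · intro h x hx
          rw [mem_inter, mem_sdiff] at hx
          exact mem_sdiff.2 ⟨h (mem_inter.2 ⟨hx.1, hx.2.1⟩), hx.2.2⟩
        · intro h x hx
          rw [mem_inter] at hx
          by_cases hxE : x ∈ E
          · exact hEC hxE
          · exact (mem_sdiff.1 (h (mem_inter.2 ⟨hx.1, mem_sdiff.2 ⟨hx.2, hxE⟩⟩))).1
      have hcong : (∀ u' ∈ K, ¬ (NB G u' ∩ W ⊆ C)) ↔
          (∀ u' ∈ K, ¬ (NB G u' ∩ (W \ E) ⊆ C \ E)) := by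
        apply forall₂_congr
        intro u' _
        exact not_congr (hok u')
      by_cases h : ∀ u' ∈ K, ¬ (NB G u' ∩ W ⊆ C)
      · rw [if_pos h, if_pos (hcong.1 h), hcards, pow_add]
      · rw [if_neg h, if_neg (fun hh => h (hcong.2 hh)), mul_zero]
  rw [step2] at step1
  rw [hWE]
  linear_combination -step1


lemma abs_add_lower (A B : ℂ) :
    ‖A‖ - ‖B‖ ≤ ‖A + B‖ := by
  have h := norm_add_le (A + B) (-B)
  rw [add_neg_cancel_right, norm_neg] at h
  linarith

/-- The key inductive property: removing a vertex from the ground set, while keeping all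
the constraints, shrinks the partition function by at most a factor `c / |w|`. -/
def PA (w : ℂ) (c : ℝ) (W : Finset V) : Prop :=
  ∀ v ∈ W, ∀ K : Finset V,
    ‖w‖ * ‖Zf G w (W.erase v) K‖ ≤
      c * ‖Zf G w (W.erase v) (K \ NB G v)‖

lemma pin1 {w : ℂ} {c r : ℝ} (hr0 : 0 < r) (hrc : r * (1 - c) = c)
    {W₁ : Finset V} (hPA : PA G w c W₁) {e : V} (he : e ∈ W₁) (K : Finset V) :
    ‖w‖ * ‖Zf G w (W₁.erase e) K‖ ≤
      r * ‖Zf G w W₁ K‖ := by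
  have hrec := Zf_rec G w he K
  set A := Zf G w (W₁.erase e) (K \ NB G e) with hA
  set B := Zf G w (W₁.erase e) K with hB
  have h := hPA e he K
  rw [← hA, ← hB] at h
  have habs : ‖A‖ - ‖w * B‖ ≤ ‖A + w * B‖ :=
    abs_add_lower A (w * B)
  rw [norm_mul] at habs
  rw [hrec]
  set x := ‖w‖ with hx
  set a := ‖A‖
  set b := ‖B‖
  set m := ‖A + w * B‖
  -- from h : x*b ≤ c*a, hrc : r*(1-c) = c, habs : a - x*b ≤ m, conclude x*b ≤ r*m
  have h1 : (1 + r) * c = r := by linear_combination -hrc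
  have k1 : (1 + r) * (x * b) ≤ (1 + r) * (c * a) :=
    mul_le_mul_of_nonneg_left h (by linarith)
  have k2 : (1 + r) * (c * a) = r * a := by rw [← mul_assoc, h1]
  have k3 : r * (a - x * b) ≤ r * m := mul_le_mul_of_nonneg_left habs hr0.le
  nlinarith [k1, k2, k3]

lemma pinmulti {w : ℂ} {c r : ℝ} (hr0 : 0 < r) (hrc : r * (1 - c) = c)
    {W₀ : Finset V} (hPAall : ∀ W₂ ⊆ W₀, PA G w c W₂) :
    ∀ (E W₁ : Finset V), W₁ ⊆ W₀ → E ⊆ W₁ → ∀ K : Finset V,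
      ‖w‖ ^ E.card * ‖Zf G w (W₁ \ E) K‖ ≤
        r ^ E.card * ‖Zf G w W₁ K‖ := by
  intro E
  induction E using Finset.induction_on with
  | empty => intro W₁ _ _ K; simp
  | insert a E ha ih =>
    intro W₁ hW₁ hins K
    have haW : a ∈ W₁ := hins (mem_insert_self a E)
    have hE : E ⊆ W₁.erase a := by
      intro x hx
      exact mem_erase.2 ⟨fun he => ha (he ▸ hx), hins (mem_insert_of_mem hx)⟩
    have h1 := ih (W₁.erase a) ((erase_subset a W₁).trans hW₁) hE K
    have h2 := pin1 G hr0 hrc (hPAall W₁ hW₁) haW K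
    have hsd : W₁ \ insert a E = (W₁.erase a) \ E := by
      ext x
      simp only [mem_sdiff, mem_erase, mem_insert]
      tauto
    rw [hsd, card_insert_of_notMem ha]
    have hxnn : (0 : ℝ) ≤ ‖w‖ := norm_nonneg w
    calc ‖w‖ ^ (E.card + 1) * ‖Zf G w ((W₁.erase a) \ E) K‖
        = ‖w‖ * (‖w‖ ^ E.card *
            ‖Zf G w ((W₁.erase a) \ E) K‖) := by ring
      _ ≤ ‖w‖ * (r ^ E.card * ‖Zf G w (W₁.erase a) K‖) :=
          mul_le_mul_of_nonneg_left h1 hxnn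
      _ = r ^ E.card * (‖w‖ * ‖Zf G w (W₁.erase a) K‖) := by ring
      _ ≤ r ^ E.card * (r * ‖Zf G w W₁ K‖) :=
          mul_le_mul_of_nonneg_left h2 (pow_nonneg hr0.le _)
      _ = r ^ (E.card + 1) * ‖Zf G w W₁ K‖ := by ring

lemma chainStep {w : ℂ} {c r : ℝ} (hr0 : 0 < r) (hrc : r * (1 - c) = c)
    {W' : Finset V} (hPAall : ∀ W₂ ⊆ W', PA G w c W₂) (u : V) (S : Finset V) :
    ‖Zf G w W' (insert u S)‖ ≤
      (1 + r ^ ((NB G u ∩ W').card)) * ‖Zf G w W' S‖ := by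
  rw [Zf_insert]
  have hWE : W' \ NB G u = W' \ (NB G u ∩ W') := by
    ext x; simp only [mem_sdiff, mem_inter]; tauto
  rw [hWE]
  set E := NB G u ∩ W' with hEdef
  have htri : ‖Zf G w W' S - w ^ E.card * Zf G w (W' \ E) S‖ ≤
      ‖Zf G w W' S‖ + ‖w‖ ^ E.card * ‖Zf G w (W' \ E) S‖ := by
    rw [sub_eq_add_neg]
    refine le_trans (norm_add_le _ _) ?_
    rw [norm_neg, norm_mul, norm_pow]
  have hpin := pinmulti G hr0 hrc hPAall E W' (Finset.Subset.refl W') inter_subset_right S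
  calc ‖Zf G w W' S - w ^ E.card * Zf G w (W' \ E) S‖
      ≤ ‖Zf G w W' S‖ + ‖w‖ ^ E.card *
          ‖Zf G w (W' \ E) S‖ := htri
    _ ≤ ‖Zf G w W' S‖ + r ^ E.card * ‖Zf G w W' S‖ := by linarith
    _ = (1 + r ^ E.card) * ‖Zf G w W' S‖ := by ring

lemma chain {w : ℂ} {c r : ℝ} (hr0 : 0 < r) (hrc : r * (1 - c) = c)
    {W' : Finset V} (hPAall : ∀ W₂ ⊆ W', PA G w c W₂) (K₀ : Finset V) :
    ∀ U : Finset V,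
      ‖Zf G w W' (K₀ ∪ U)‖ ≤
        (∏ E ∈ U.image (fun u => NB G u ∩ W'), (1 + r ^ E.card)) *
          ‖Zf G w W' K₀‖ := by
  intro U
  induction U using Finset.induction_on with
  | empty => simp
  | insert u U ha ih =>
    rw [Finset.union_insert]
    by_cases hdup : (NB G u ∩ W') ∈ U.image (fun u => NB G u ∩ W')
    · obtain ⟨u', hu'U, hfu'⟩ := mem_image.1 hdup
      rw [Zf_dup G w (mem_union_right K₀ hu'U) hfu'.symm]
      rw [Finset.image_insert, insert_eq_self.2 hdup]
      exact ih
    · rw [Finset.image_insert, Finset.prod_insert hdup]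
      have hstep := chainStep G hr0 hrc hPAall u (K₀ ∪ U)
      have hfac : (0:ℝ) ≤ 1 + r ^ (NB G u ∩ W').card :=
        add_nonneg zero_le_one (pow_nonneg hr0.le _)
      calc ‖Zf G w W' (insert u (K₀ ∪ U))‖
          ≤ (1 + r ^ (NB G u ∩ W').card) * ‖Zf G w W' (K₀ ∪ U)‖ := hstep
        _ ≤ (1 + r ^ (NB G u ∩ W').card) *
            ((∏ E ∈ U.image (fun u => NB G u ∩ W'), (1 + r ^ E.card)) *
              ‖Zf G w W' K₀‖) := mul_le_mul_of_nonneg_left ih hfac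
        _ = ((1 + r ^ (NB G u ∩ W').card) *
            ∏ E ∈ U.image (fun u => NB G u ∩ W'), (1 + r ^ E.card)) *
              ‖Zf G w W' K₀‖ := by ring


/-- The structural trichotomy that bounds the product of chain factors. -/
lemma tri {r : ℝ} (hr0 : 0 ≤ r) (hr1 : r ≤ 1) {D : ℕ} (hD : ∀ v : V, (NB G v).card ≤ D)
    {W : Finset V} {v : V} (hv : v ∈ W) (K : Finset V)
    (hne : ∀ u ∈ K ∩ NB G v, NB G u ∩ W.erase v ≠ ∅) :
    (∏ E ∈ (K ∩ NB G v).image (fun u => NB G u ∩ W.erase v), (1 + r ^ E.card))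
      ≤ (1 + r) ^ (D - 1) ∨
    (3 ≤ D ∧ (∏ E ∈ (K ∩ NB G v).image (fun u => NB G u ∩ W.erase v), (1 + r ^ E.card))
      ≤ (1 + r ^ 2) * (1 + r) ^ (D - 1)) := by
  set U := K ∩ NB G v with hU
  set f : V → Finset V := fun u => NB G u ∩ W.erase v with hf
  have hDv : (NB G v).card ≤ D := hD v
  have hsize : ∀ u ∈ U, (f u).card ≤ D - 1 := by
    intro u hu
    have hvNBu : v ∈ NB G u := (NB_symm G).1 (mem_inter.1 hu).2
    have hsub : f u ⊆ (NB G u).erase v := by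
      intro x hx
      exact mem_erase.2 ⟨(mem_erase.1 (mem_inter.1 hx).2).1, (mem_inter.1 hx).1⟩
    calc (f u).card ≤ ((NB G u).erase v).card := card_le_card hsub
      _ = (NB G u).card - 1 := card_erase_of_mem hvNBu
      _ ≤ D - 1 := Nat.sub_le_sub_right (hD u) 1
  have hposE : ∀ E ∈ U.image f, 1 ≤ E.card := by
    intro E hE
    obtain ⟨u, hu, rfl⟩ := mem_image.1 hE
    exact card_pos.2 (nonempty_iff_ne_empty.2 (hne u hu))
  have hfac : ∀ E ∈ U.image f, 1 + r ^ E.card ≤ 1 + r := by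
    intro E hE
    have h2 : r ^ E.card ≤ r ^ 1 := pow_le_pow_of_le_one hr0 hr1 (hposE E hE)
    rw [pow_one] at h2; linarith
  have hnonneg : ∀ E ∈ U.image f, (0:ℝ) ≤ 1 + r ^ E.card := fun E _ =>
    add_nonneg zero_le_one (pow_nonneg hr0 _)
  have hcardU : U.card ≤ D := le_trans (card_le_card inter_subset_right) hDv
  have hprod_le : ∀ n : ℕ, (U.image f).card ≤ n →
      (∏ E ∈ U.image f, (1 + r ^ E.card)) ≤ (1 + r) ^ n := by
    intro n hn
    calc ∏ E ∈ U.image f, (1 + r ^ E.card) ≤ ∏ _E ∈ U.image f, (1 + r) :=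
        Finset.prod_le_prod hnonneg hfac
      _ = (1 + r) ^ (U.image f).card := by rw [Finset.prod_const]
      _ ≤ (1 + r) ^ n := pow_le_pow_right₀ (by linarith) hn
  by_cases hex : ∃ E ∈ U.image f, 2 ≤ E.card
  · obtain ⟨E₀, hE₀, hE₀2⟩ := hex
    right
    have hE₀D : E₀.card ≤ D - 1 := by
      obtain ⟨u₀, hu₀, rfl⟩ := mem_image.1 hE₀; exact hsize u₀ hu₀
    have hD3 : 3 ≤ D := by omega
    refine ⟨hD3, ?_⟩
    rw [← Finset.mul_prod_erase _ _ hE₀]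
    have h2 : 1 + r ^ E₀.card ≤ 1 + r ^ 2 := by
      have := pow_le_pow_of_le_one hr0 hr1 hE₀2
      linarith
    have h3 : (∏ E ∈ (U.image f).erase E₀, (1 + r ^ E.card)) ≤ (1 + r) ^ (D - 1) := by
      calc ∏ E ∈ (U.image f).erase E₀, (1 + r ^ E.card)
          ≤ ∏ _E ∈ (U.image f).erase E₀, (1 + r) :=
            Finset.prod_le_prod (fun E hE => hnonneg E (mem_of_mem_erase hE))
              (fun E hE => hfac E (mem_of_mem_erase hE))
        _ = (1 + r) ^ ((U.image f).erase E₀).card := by rw [Finset.prod_const]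
        _ ≤ (1 + r) ^ (D - 1) := by
            apply pow_le_pow_right₀ (by linarith)
            rw [card_erase_of_mem hE₀]
            have h4 : (U.image f).card ≤ U.card := card_image_le
            omega
    have hprod_nonneg : (0:ℝ) ≤ ∏ E ∈ (U.image f).erase E₀, (1 + r ^ E.card) :=
      Finset.prod_nonneg (fun E hE => hnonneg E (mem_of_mem_erase hE))
    calc (1 + r ^ E₀.card) * ∏ E ∈ (U.image f).erase E₀, (1 + r ^ E.card)
        ≤ (1 + r ^ 2) * ∏ E ∈ (U.image f).erase E₀, (1 + r ^ E.card) :=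
          mul_le_mul_of_nonneg_right h2 hprod_nonneg
      _ ≤ (1 + r ^ 2) * (1 + r) ^ (D - 1) :=
          mul_le_mul_of_nonneg_left h3 (add_nonneg zero_le_one (pow_nonneg hr0 2))
  · left
    push_neg at hex
    have hall1 : ∀ E ∈ U.image f, E.card = 1 := fun E hE =>
      le_antisymm (by have := hex E hE; omega) (hposE E hE)
    apply hprod_le
    by_cases hvK : v ∈ K
    · have hvU : v ∈ U := mem_inter.2 ⟨hvK, self_mem_NB G v⟩
      have hfv1 : (f v).card = 1 := hall1 _ (mem_image_of_mem f hvU)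
      obtain ⟨s, hs⟩ := card_eq_one.1 hfv1
      have hsmem : s ∈ f v := by rw [hs]; exact mem_singleton_self s
      have hsNB : s ∈ NB G v := (mem_inter.1 hsmem).1
      have hsW : s ∈ W.erase v := (mem_inter.1 hsmem).2
      by_cases hsU : s ∈ U
      · have hsfs : s ∈ f s := mem_inter.2 ⟨self_mem_NB G s, hsW⟩
        have hfs1 : (f s).card = 1 := hall1 _ (mem_image_of_mem f hsU)
        have hfs : f s = {s} := by
          obtain ⟨t, ht⟩ := card_eq_one.1 hfs1
          rw [ht] at hsfs ⊢
          rw [mem_singleton] at hsfs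
          rw [hsfs]
        have hsv : s ≠ v := (mem_erase.1 hsW).1
        have himg : U.image f = (U.erase v).image f := by
          apply Finset.Subset.antisymm
          · intro E hE
            obtain ⟨u, hu, rfl⟩ := mem_image.1 hE
            by_cases huv : u = v
            · subst huv
              have heq : f u = f s := by rw [hfs, hs]
              rw [heq]
              exact mem_image_of_mem f (mem_erase.2 ⟨hsv, hsU⟩)
            · exact mem_image_of_mem f (mem_erase.2 ⟨huv, hu⟩)
          · exact image_subset_image (erase_subset _ _)
        rw [himg]
        calc ((U.erase v).image f).card ≤ (U.erase v).card := card_image_le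
          _ = U.card - 1 := by rw [card_erase_of_mem hvU]
          _ ≤ D - 1 := Nat.sub_le_sub_right hcardU 1
      · have hUsub : U ⊆ (NB G v).erase s := by
          intro u hu
          exact mem_erase.2 ⟨fun he => hsU (he ▸ hu), (mem_inter.1 hu).2⟩
        calc (U.image f).card ≤ U.card := card_image_le
          _ ≤ ((NB G v).erase s).card := card_le_card hUsub
          _ = (NB G v).card - 1 := card_erase_of_mem hsNB
          _ ≤ D - 1 := Nat.sub_le_sub_right hDv 1
    · have hUsub : U ⊆ (NB G v).erase v := by
        intro u hu
        exact mem_erase.2 ⟨fun he => hvK (he ▸ (mem_inter.1 hu).1), (mem_inter.1 hu).2⟩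
      calc (U.image f).card ≤ U.card := card_image_le
        _ ≤ ((NB G v).erase v).card := card_le_card hUsub
        _ = (NB G v).card - 1 := card_erase_of_mem (self_mem_NB G v)
        _ ≤ D - 1 := Nat.sub_le_sub_right hDv 1

lemma Astep {w : ℂ} {c r : ℝ} {D : ℕ} (hc0 : 0 < c) (hr0 : 0 < r) (hr1 : r ≤ 1)
    (hrc : r * (1 - c) = c) (hD : ∀ v : V, (NB G v).card ≤ D)
    (HN1 : ‖w‖ * (1 + r) ^ (D - 1) ≤ c)
    (HN2 : 3 ≤ D → ‖w‖ * ((1 + r ^ 2) * (1 + r) ^ (D - 1)) ≤ c)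
    {W : Finset V} (IH : ∀ W₁ : Finset V, W₁.card < W.card → PA G w c W₁) :
    PA G w c W := by
  intro v hv K
  set W' := W.erase v with hW'
  by_cases hne : ∃ u ∈ K ∩ NB G v, NB G u ∩ W' = ∅
  · obtain ⟨u, hu, hfz⟩ := hne
    rw [Zf_zero_of_empty_constraint G w (mem_inter.1 hu).1 hfz]
    rw [norm_zero, mul_zero]
    exact mul_nonneg hc0.le (norm_nonneg _)
  · push_neg at hne
    have hPAall : ∀ W₂ ⊆ W', PA G w c W₂ := by
      intro W₂ hW₂
      apply IH
      have h1 : W₂.card ≤ W'.card := card_le_card hW₂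
      have h2 : W'.card < W.card := by
        rw [hW', card_erase_of_mem hv]
        have := card_pos.2 ⟨v, hv⟩
        omega
      omega
    have hchain := chain G hr0 hrc hPAall (K \ NB G v) (K ∩ NB G v)
    rw [sdiff_union_inter] at hchain
    have htri := tri G hr0.le hr1 hD hv K (fun u hu => nonempty_iff_ne_empty.1 (hne u hu))
    rw [← hW'] at htri
    have hxnn : (0:ℝ) ≤ ‖w‖ := norm_nonneg w
    have habsnn : (0:ℝ) ≤ ‖Zf G w W' (K \ NB G v)‖ := norm_nonneg _
    have hPrnn : (0:ℝ) ≤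
        ∏ E ∈ (K ∩ NB G v).image (fun u => NB G u ∩ W'), (1 + r ^ E.card) :=
      Finset.prod_nonneg (fun E _ => add_nonneg zero_le_one (pow_nonneg hr0.le _))
    have hxPr : ‖w‖ *
        (∏ E ∈ (K ∩ NB G v).image (fun u => NB G u ∩ W'), (1 + r ^ E.card)) ≤ c := by
      rcases htri with h | ⟨hD3, h⟩
      · exact le_trans (mul_le_mul_of_nonneg_left h hxnn) HN1
      · exact le_trans (mul_le_mul_of_nonneg_left h hxnn) (HN2 hD3)
    calc ‖w‖ * ‖Zf G w W' K‖
        ≤ ‖w‖ *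
            ((∏ E ∈ (K ∩ NB G v).image (fun u => NB G u ∩ W'), (1 + r ^ E.card)) *
              ‖Zf G w W' (K \ NB G v)‖) :=
          mul_le_mul_of_nonneg_left hchain hxnn
      _ = (‖w‖ *
            (∏ E ∈ (K ∩ NB G v).image (fun u => NB G u ∩ W'), (1 + r ^ E.card))) *
              ‖Zf G w W' (K \ NB G v)‖ := by ring
      _ ≤ c * ‖Zf G w W' (K \ NB G v)‖ :=
          mul_le_mul_of_nonneg_right hxPr habsnn

lemma PA_all {w : ℂ} {c r : ℝ} {D : ℕ} (hc0 : 0 < c) (hr0 : 0 < r) (hr1 : r ≤ 1)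
    (hrc : r * (1 - c) = c) (hD : ∀ v : V, (NB G v).card ≤ D)
    (HN1 : ‖w‖ * (1 + r) ^ (D - 1) ≤ c)
    (HN2 : 3 ≤ D → ‖w‖ * ((1 + r ^ 2) * (1 + r) ^ (D - 1)) ≤ c) :
    ∀ W : Finset V, PA G w c W := by
  have H : ∀ n : ℕ, ∀ W : Finset V, W.card ≤ n → PA G w c W := by
    intro n
    induction n with
    | zero =>
      intro W hW v hv K
      have hW0 : W = ∅ := card_eq_zero.1 (Nat.le_zero.1 hW)
      subst hW0
      exact absurd hv (notMem_empty v)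
    | succ n ih =>
      intro W hW
      apply Astep G hc0 hr0 hr1 hrc hD HN1 HN2
      intro W₁ h
      exact ih W₁ (by omega)
  exact fun W => H W.card W le_rfl

lemma nonvanish {w : ℂ} {c r : ℝ} {D : ℕ} (hc0 : 0 < c) (hc1 : c < 1)
    (hr0 : 0 < r) (hr1 : r ≤ 1)
    (hrc : r * (1 - c) = c) (hD : ∀ v : V, (NB G v).card ≤ D)
    (HN1 : ‖w‖ * (1 + r) ^ (D - 1) ≤ c)
    (HN2 : 3 ≤ D → ‖w‖ * ((1 + r ^ 2) * (1 + r) ^ (D - 1)) ≤ c) :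
    ∀ (n : ℕ) (W : Finset V), W.card ≤ n → ∀ K : Finset V,
      (∀ u ∈ K, NB G u ∩ W ≠ ∅) → Zf G w W K ≠ 0 := by
  intro n
  induction n with
  | zero =>
    intro W hW K hK
    have hW0 : W = ∅ := card_eq_zero.1 (Nat.le_zero.1 hW)
    subst hW0
    have hKe : K = ∅ := by
      rw [eq_empty_iff_forall_notMem]
      intro u hu
      exact hK u hu (by simp)
    subst hKe
    rw [Zf_empty]
    exact one_ne_zero
  | succ n ih =>
    intro W hW K hK
    rcases W.eq_empty_or_nonempty with rfl | ⟨v, hv⟩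
    · have hKe : K = ∅ := by
        rw [eq_empty_iff_forall_notMem]
        intro u hu
        exact hK u hu (by simp)
      subst hKe
      rw [Zf_empty]
      exact one_ne_zero
    · have hrec := Zf_rec G w hv K
      have hA : Zf G w (W.erase v) (K \ NB G v) ≠ 0 := by
        apply ih (W.erase v) (by rw [card_erase_of_mem hv]; omega)
        intro u hu
        intro hcon
        apply hK u (mem_sdiff.1 hu).1
        rw [eq_empty_iff_forall_notMem]
        intro x hx
        by_cases hxv : x = v
        · subst hxv
          exact (mem_sdiff.1 hu).2 ((NB_symm G).1 (mem_inter.1 hx).1)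
        · have hmem : x ∈ NB G u ∩ W.erase v :=
            mem_inter.2 ⟨(mem_inter.1 hx).1, mem_erase.2 ⟨hxv, (mem_inter.1 hx).2⟩⟩
          rw [hcon] at hmem
          exact notMem_empty x hmem
      have hPA := PA_all G hc0 hr0 hr1 hrc hD HN1 HN2 W v hv K
      intro h0
      rw [h0] at hrec
      have hA2 : Zf G w (W.erase v) (K \ NB G v) = -(w * Zf G w (W.erase v) K) :=
        eq_neg_of_add_eq_zero_left hrec.symm
      have habseq : ‖Zf G w (W.erase v) (K \ NB G v)‖ =
          ‖w‖ * ‖Zf G w (W.erase v) K‖ := by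
        rw [hA2, norm_neg, norm_mul]
      have hApos : 0 < ‖Zf G w (W.erase v) (K \ NB G v)‖ :=
        norm_pos_iff.mpr hA
      nlinarith [hPA, habseq, hApos, hc1]

lemma Zf_ne_zero {w : ℂ} {c r : ℝ} {D : ℕ} (hc0 : 0 < c) (hc1 : c < 1)
    (hr0 : 0 < r) (hr1 : r ≤ 1)
    (hrc : r * (1 - c) = c) (hD : ∀ v : V, (NB G v).card ≤ D)
    (HN1 : ‖w‖ * (1 + r) ^ (D - 1) ≤ c)
    (HN2 : 3 ≤ D → ‖w‖ * ((1 + r ^ 2) * (1 + r) ^ (D - 1)) ≤ c) :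
    Zf G w univ univ ≠ 0 := by
  apply nonvanish G hc0 hc1 hr0 hr1 hrc hD HN1 HN2 (univ : Finset V).card univ le_rfl
  intro u _
  intro hcon
  have : u ∈ NB G u ∩ univ := mem_inter.2 ⟨self_mem_NB G u, mem_univ u⟩
  rw [hcon] at this
  exact notMem_empty u this

lemma domPoly_eq (z : ℂ) (hz0 : z ≠ 0) :
    dominationPoly G z = z ^ (Fintype.card V) * Zf G z⁻¹ univ univ := by
  unfold dominationPoly Zf
  rw [Finset.sum_filter, powerset_univ, Finset.mul_sum]
  apply Finset.sum_nbij' (fun S => Sᶜ) (fun C => Cᶜ) (by simp) (by simp) (by simp) (by simp)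
  intro S _
  have hcond : (∀ u : V, u ∈ S ∨ ∃ v ∈ S, G.Adj u v) ↔
      (∀ u ∈ (univ : Finset V), ¬ (NB G u ∩ univ ⊆ Sᶜ)) := by
    simp only [inter_univ, mem_univ, true_implies]
    apply forall_congr'
    intro u
    constructor
    · rintro (h | ⟨v', hv', hadj⟩) hsub
      · exact (mem_compl.1 (hsub (self_mem_NB G u))) h
      · exact (mem_compl.1 (hsub ((mem_NB G).2 (Or.inr hadj)))) hv'
    · intro h
      by_contra hcon
      push_neg at hcon
      apply h
      intro x hx
      rw [mem_compl]
      rcases (mem_NB G).1 hx with rfl | hadj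
      · exact hcon.1
      · intro hxS
        exact hcon.2 x hxS hadj
  by_cases hS : ∀ u : V, u ∈ S ∨ ∃ v ∈ S, G.Adj u v
  · rw [if_pos hS, if_pos (hcond.1 hS)]
    rw [Finset.card_compl]
    have hle : S.card ≤ Fintype.card V := Finset.card_le_univ S
    set m := Fintype.card V - S.card with hm
    have hcV : Fintype.card V = S.card + m := by omega
    rw [hcV, pow_add, mul_assoc, ← mul_pow, mul_inv_cancel₀ hz0, one_pow, mul_one]
  · rw [if_neg hS, if_neg (fun h => hS (hcond.2 h)), mul_zero]

end DomPolyAux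



/-- If `G` has no isolated vertices and maximum degree `Δ`, then every complex root `z` of the
domination polynomial satisfies `|z| < 2^{Δ+1}`. -/
theorem dominationPoly_roots_abs_lt
    {V : Type} [Fintype V] [DecidableEq V] (G : SimpleGraph V) [DecidableRel G.Adj]
    (hiso : ∀ v : V, ∃ u : V, G.Adj v u)
    (z : ℂ) (hz : dominationPoly G z = 0) :
    ‖z‖ < (2 : ℝ) ^ (G.maxDegree + 1) := by
  classical
  cases isEmpty_or_nonempty V with
  | inl hempty =>
    exfalso
    have hone : dominationPoly G z = 1 := by
      unfold dominationPoly
      have h1 : (univ : Finset (Finset V)).filter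
          (fun S => ∀ u : V, u ∈ S ∨ ∃ v ∈ S, G.Adj u v) = {(∅ : Finset V)} := by
        apply Finset.eq_singleton_iff_unique_mem.2
        constructor
        · exact mem_filter.2 ⟨mem_univ _, fun u => (hempty.false u).elim⟩
        · intro S _
          rw [eq_empty_iff_forall_notMem]
          intro x _
          exact hempty.false x
      rw [h1, sum_singleton, card_empty, pow_zero]
    rw [hone] at hz
    exact one_ne_zero hz
  | inr hne =>
    by_contra hge
    push_neg at hge
    have h2pos : (0:ℝ) < 2 ^ (G.maxDegree + 1) := by positivity
    have hz0 : z ≠ 0 := by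
      intro h
      rw [h, norm_zero] at hge
      linarith
    set D : ℕ := G.maxDegree + 1 with hDdef
    have hmd : 1 ≤ G.maxDegree := by
      obtain ⟨v₀⟩ := hne
      obtain ⟨u, hu⟩ := hiso v₀
      have h1 : 0 < G.degree v₀ := G.degree_pos_iff_exists_adj v₀ |>.2 ⟨u, hu⟩
      exact le_trans h1 (G.degree_le_maxDegree v₀)
    have hD2 : 2 ≤ D := by omega
    have hDb : ∀ v : V, (DomPolyAux.NB G v).card ≤ D := by
      intro v
      rw [DomPolyAux.card_NB]
      have := G.degree_le_maxDegree v
      omega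
    set w : ℂ := z⁻¹ with hwdef
    set x : ℝ := ‖w‖ with hxdef
    have hxnn : 0 ≤ x := norm_nonneg w
    have hzpos : (0:ℝ) < ‖z‖ := lt_of_lt_of_le h2pos hge
    have hx2D : x * 2 ^ D ≤ 1 := by
      rw [hxdef, hwdef, norm_inv]
      calc (‖z‖)⁻¹ * 2 ^ D ≤ (‖z‖)⁻¹ * ‖z‖ := by
            apply mul_le_mul_of_nonneg_left _ (inv_nonneg.2 hzpos.le)
            exact hge
        _ = 1 := inv_mul_cancel₀ hzpos.ne'
    have hZ : DomPolyAux.Zf G w univ univ ≠ 0 := by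
      rcases Nat.lt_or_ge D 3 with hDlt | hD3
      · -- D = 2, c = 1/2, r = 1
        have hD2' : D = 2 := by omega
        apply DomPolyAux.Zf_ne_zero G (c := 1/2) (r := 1) (D := D)
          (by norm_num) (by norm_num) (by norm_num) (by norm_num) (by norm_num) hDb
        · rw [hD2'] at hx2D ⊢
          norm_num at hx2D ⊢
          linarith
        · intro h3
          omega
      · -- D ≥ 3, c = 2/7, r = 2/5
        set k : ℕ := D - 1 with hkdef
        have hk2 : 2 ≤ k := by omega
        have hDk : D = k + 1 := by omega
        have e0 : (0:ℝ) < 2 ^ k := by positivity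
        have e1 : x * 2 ^ k ≤ 1 / 2 := by
          rw [hDk, pow_succ] at hx2D
          nlinarith
        have e2 : ((7:ℝ)/10) ^ k ≤ 49/100 := by
          have h := pow_le_pow_of_le_one (by norm_num : (0:ℝ) ≤ 7/10)
            (by norm_num : (7:ℝ)/10 ≤ 1) hk2
          norm_num at h
          linarith
        have e3 : (0:ℝ) ≤ ((7:ℝ)/10) ^ k := by positivity
        have e4 : (0:ℝ) ≤ x * 2 ^ k := by positivity
        have e5 : ((1:ℝ) + 2/5) ^ k = (7/10) ^ k * 2 ^ k := by
          rw [← mul_pow]; norm_num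
        have hmain : x * ((7/10) ^ k * 2 ^ k) ≤ 49/200 := by
          calc x * ((7/10) ^ k * 2 ^ k) = (x * 2 ^ k) * (7/10) ^ k := by ring
            _ ≤ (1/2) * (49/100) := mul_le_mul e1 e2 e3 (by norm_num)
            _ = 49/200 := by norm_num
        apply DomPolyAux.Zf_ne_zero G (c := 2/7) (r := 2/5) (D := D)
          (by norm_num) (by norm_num) (by norm_num) (by norm_num) (by norm_num) hDb
        · rw [show D - 1 = k from rfl, e5]
          calc x * ((7/10) ^ k * 2 ^ k) ≤ 49/200 := hmain
            _ ≤ 2/7 := by norm_num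
        · intro _
          rw [show D - 1 = k from rfl, e5]
          have : (1:ℝ) + (2/5)^2 = 29/25 := by norm_num
          rw [this]
          calc x * (29/25 * ((7/10) ^ k * 2 ^ k))
              = (29/25) * (x * ((7/10) ^ k * 2 ^ k)) := by ring
            _ ≤ (29/25) * (49/200) := by
                apply mul_le_mul_of_nonneg_left hmain (by norm_num)
            _ ≤ 2/7 := by norm_num
    have hiden := DomPolyAux.domPoly_eq G z hz0
    rw [hz] at hiden
    have hzn : z ^ (Fintype.card V) ≠ 0 := pow_ne_zero _ hz0
    rw [← hwdef] at hiden
    exact hZ (by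
      rcases mul_eq_zero.1 hiden.symm with h | h
      · exact absurd h hzn
      · exact h)
end
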